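/- arXiv:1110.6014 — 6 statements merged into one kernel-verified Lean document; each statement's English description precedes it below -/
import Mathlib

section
/- Let φ: ℂ → ℝ be a function of class C² such that both sup_{z∈ℂ} |φ(z)| and sup_{z∈ℂ} |−Δφ(z) + φ(z)| are finite. Then sup_{z∈ℂ} |φ(z)| ≤ 4 · sup_{z∈ℂ} |−Δφ(z) + φ(z)|. -/
open Filter

/-- The Laplacian `∂²φ/∂x² + ∂²φ/∂y²` of a function `φ : ℂ → ℝ`,
identifying `ℂ` with `ℝ²` via `z = x + iy`. -/
noncomputable def laplacian (φ : ℂ → ℝ) (z : ℂ) : ℝ :=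
  iteratedFDeriv ℝ 2 φ z ![1, 1] + iteratedFDeriv ℝ 2 φ z ![Complex.I, Complex.I]

-- auxiliary lemmas
noncomputable def dd (f : ℂ → ℝ) (z v : ℂ) : ℝ :=
  deriv (deriv (fun t : ℝ => f (z + t • v))) 0

lemma hasDerivAt_line (z v : ℂ) (t : ℝ) :
    HasDerivAt (fun s : ℝ => z + s • v) v t := by
  have h := (hasDerivAt_id t).smul_const v
  simpa using h.const_add z

lemma contDiff_line (z v : ℂ) : ContDiff ℝ 2 (fun s : ℝ => z + s • v) :=
  contDiff_const.add (contDiff_id.smul contDiff_const)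

lemma deriv_line (f : ℂ → ℝ) (hf : ContDiff ℝ 2 f) (z v : ℂ) (t : ℝ) :
    deriv (fun s : ℝ => f (z + s • v)) t = fderiv ℝ f (z + t • v) v := by
  have hdf : DifferentiableAt ℝ f (z + t • v) :=
    (hf.differentiable (by norm_num)).differentiableAt
  exact (hdf.hasFDerivAt.comp_hasDerivAt t (hasDerivAt_line z v t)).deriv

lemma dd_eq (f : ℂ → ℝ) (hf : ContDiff ℝ 2 f) (z v : ℂ) :
    dd f z v = fderiv ℝ (fderiv ℝ f) z v v := by
  have h1 : (deriv (fun s : ℝ => f (z + s • v))) =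
      fun t : ℝ => fderiv ℝ f (z + t • v) v := funext fun t => deriv_line f hf z v t
  have hA : ContDiff ℝ 1 (fderiv ℝ f) := hf.fderiv_right (by norm_num)
  have hA' : HasFDerivAt (fderiv ℝ f) (fderiv ℝ (fderiv ℝ f) z) z :=
    ((hA.differentiable (by norm_num)) z).hasFDerivAt
  have key : ∀ t : ℝ, HasDerivAt (fun s : ℝ => fderiv ℝ f (z + s • v))
      (fderiv ℝ (fderiv ℝ f) (z + t • v) v) t := fun t =>
    (((hA.differentiable (by norm_num)) (z + t • v)).hasFDerivAt).comp_hasDerivAt t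
      (hasDerivAt_line z v t)
  have h2 : HasDerivAt (fun t : ℝ => fderiv ℝ f (z + t • v))
      (fderiv ℝ (fderiv ℝ f) z v) 0 := by simpa using key 0
  have h3 : HasDerivAt (fun t : ℝ => fderiv ℝ f (z + t • v) v)
      (fderiv ℝ (fderiv ℝ f) z v v) 0 := by
    have := h2.clm_apply (hasDerivAt_const (0:ℝ) v)
    simpa using this
  rw [dd, h1, h3.deriv]

lemma laplacian_eq_dd (f : ℂ → ℝ) (hf : ContDiff ℝ 2 f) (z : ℂ) :
    laplacian f z = dd f z 1 + dd f z Complex.I := by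
  rw [laplacian, iteratedFDeriv_two_apply, iteratedFDeriv_two_apply,
    dd_eq f hf z 1, dd_eq f hf z Complex.I]
  simp

/-- 1D second derivative test at a local max. -/
lemma second_deriv_nonpos {g : ℝ → ℝ} (hg : ContDiff ℝ 2 g) (hmax : IsLocalMax g 0) :
    deriv (deriv g) 0 ≤ 0 := by
  by_contra h
  push_neg at h
  have hg1 : ContDiff ℝ 1 (deriv g) := by
    have : ContDiff ℝ ((1:ℕ∞) + 1) g := by norm_num at hg ⊢; exact hg
    exact (contDiff_succ_iff_deriv.mp this).2.2
  have hd0 : deriv g 0 = 0 := hmax.deriv_eq_zero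
  have hD : HasDerivAt (deriv g) (deriv (deriv g) 0) 0 :=
    ((hg1.differentiable (by norm_num)) 0).hasDerivAt
  have hslope := hasDerivAt_iff_tendsto_slope.mp hD
  have hev : ∀ᶠ t in nhdsWithin (0:ℝ) (Set.Ioi 0), 0 < deriv g t := by
    have h1 : ∀ᶠ t in nhdsWithin (0:ℝ) {(0:ℝ)}ᶜ, 0 < slope (deriv g) 0 t :=
      hslope.eventually (eventually_gt_nhds h)
    have h2 : ∀ᶠ t in nhdsWithin (0:ℝ) (Set.Ioi 0), 0 < slope (deriv g) 0 t :=
      h1.filter_mono (nhdsWithin_mono 0 (fun t ht => ne_of_gt ht))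
    filter_upwards [h2, self_mem_nhdsWithin] with t ht ht'
    have : slope (deriv g) 0 t = deriv g t / t := by
      simp [slope_def_field, hd0]
    rw [this] at ht
    have ht0 : (0:ℝ) < t := ht'
    nlinarith [mul_pos ht ht0, div_mul_cancel₀ (deriv g t) (ne_of_gt ht0)]
  rw [eventually_nhdsWithin_iff] at hev
  obtain ⟨a, ha, haev⟩ := Metric.eventually_nhds_iff_ball.mp hev
  -- g is strictly monotone on [0, a/2]
  have hmono : StrictMonoOn g (Set.Icc 0 (a/2)) := by
    apply strictMonoOn_of_deriv_pos (convex_Icc _ _) hg.continuous.continuousOn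
    intro t ht
    rw [interior_Icc] at ht
    apply haev t
    · rw [Metric.mem_ball, Real.dist_eq, sub_zero, abs_of_pos ht.1]
      linarith [ht.2, ha]
    · exact ht.1
  -- contradiction with local max
  have hloc : ∀ᶠ t in nhdsWithin (0:ℝ) (Set.Ioi 0), g t ≤ g 0 :=
    hmax.filter_mono nhdsWithin_le_nhds
  have hIoo : Set.Ioo (0:ℝ) (a/2) ∈ nhdsWithin (0:ℝ) (Set.Ioi 0) :=
    Ioo_mem_nhdsGT_of_mem ⟨le_rfl, by linarith⟩
  obtain ⟨t, ht1, ht2⟩ := (hloc.and (eventually_of_mem hIoo (fun x hx => hx))).exists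
  have := hmono (Set.mem_Icc.mpr ⟨le_rfl, by linarith⟩)
    (Set.mem_Icc.mpr ⟨le_of_lt ht2.1, le_of_lt ht2.2⟩) ht2.1
  linarith

lemma dd_nonpos_of_localMax {f : ℂ → ℝ} (hf : ContDiff ℝ 2 f) {z : ℂ}
    (hmax : IsLocalMax f z) (v : ℂ) : dd f z v ≤ 0 := by
  have hg : ContDiff ℝ 2 (fun t : ℝ => f (z + t • v)) := hf.comp (contDiff_line z v)
  apply second_deriv_nonpos hg
  have hcont : Filter.Tendsto (fun t : ℝ => z + t • v) (nhds 0) (nhds z) := by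
    have := (contDiff_line z v).continuous.tendsto (0:ℝ)
    simpa using this
  have : ∀ᶠ t in nhds (0:ℝ), f (z + t • v) ≤ f z := hcont.eventually hmax
  simpa [IsLocalMax, IsMaxFilter] using this

lemma hasDerivAt_qre (w z v : ℂ) (t : ℝ) :
    HasDerivAt (fun s : ℝ => (z + s • v - w).re) v.re t := by
  have := Complex.reCLM.hasFDerivAt.comp_hasDerivAt t ((hasDerivAt_line z v t).sub_const w)
  simpa only [Function.comp_def, Complex.reCLM_apply] using this

lemma hasDerivAt_qim (w z v : ℂ) (t : ℝ) :
    HasDerivAt (fun s : ℝ => (z + s • v - w).im) v.im t := by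
  have := Complex.imCLM.hasFDerivAt.comp_hasDerivAt t ((hasDerivAt_line z v t).sub_const w)
  simpa only [Function.comp_def, Complex.imCLM_apply] using this

lemma dd_q (w z v : ℂ) :
    dd (fun u => (u - w).re ^ 2 + (u - w).im ^ 2) z v = 2 * (v.re ^ 2 + v.im ^ 2) := by
  have h1 : ∀ t : ℝ, HasDerivAt
      (fun s : ℝ => (z + s • v - w).re ^ 2 + (z + s • v - w).im ^ 2)
      (2 * (z + t • v - w).re * v.re + 2 * (z + t • v - w).im * v.im) t := fun t => by
    have := ((hasDerivAt_qre w z v t).pow 2).add ((hasDerivAt_qim w z v t).pow 2)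
    refine this.congr_deriv ?_
    push_cast
    ring
  have hd1 : deriv (fun s : ℝ => (z + s • v - w).re ^ 2 + (z + s • v - w).im ^ 2)
      = fun t : ℝ => 2 * (z + t • v - w).re * v.re + 2 * (z + t • v - w).im * v.im :=
    funext fun t => (h1 t).deriv
  have h2 : HasDerivAt
      (fun t : ℝ => 2 * (z + t • v - w).re * v.re + 2 * (z + t • v - w).im * v.im)
      (2 * (v.re ^ 2 + v.im ^ 2)) 0 := by
    have := ((((hasDerivAt_qre w z v 0).const_mul 2).mul_const v.re).add
      (((hasDerivAt_qim w z v 0).const_mul 2).mul_const v.im))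
    refine this.congr_deriv ?_
    ring
  rw [dd, hd1, h2.deriv]

lemma contDiff_q (w : ℂ) : ContDiff ℝ 2 (fun u : ℂ => (u - w).re ^ 2 + (u - w).im ^ 2) := by
  have hre : ContDiff ℝ 2 (fun u : ℂ => (u - w).re) :=
    Complex.reCLM.contDiff.comp (contDiff_id.sub contDiff_const)
  have him : ContDiff ℝ 2 (fun u : ℂ => (u - w).im) :=
    Complex.imCLM.contDiff.comp (contDiff_id.sub contDiff_const)
  exact (hre.pow 2).add (him.pow 2)

lemma laplacian_q (w z : ℂ) :
    laplacian (fun u : ℂ => (u - w).re ^ 2 + (u - w).im ^ 2) z = 4 := by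
  rw [laplacian_eq_dd _ (contDiff_q w) z, dd_q, dd_q]
  simp [Complex.one_re, Complex.one_im, Complex.I_re, Complex.I_im]
  norm_num

lemma laplacian_add_smul (ψ q : ℂ → ℝ) (hψ : ContDiff ℝ 2 ψ) (hq : ContDiff ℝ 2 q)
    (c : ℝ) (z : ℂ) :
    laplacian (fun u => ψ u + c * q u) z = laplacian ψ z + c * laplacian q z := by
  have hkey : ∀ m : Fin 2 → ℂ, iteratedFDeriv ℝ 2 (fun u => ψ u + c * q u) z m
      = iteratedFDeriv ℝ 2 ψ z m + c * iteratedFDeriv ℝ 2 q z m := by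
    intro m
    have h1 : (fun u => ψ u + c * q u) = ψ + c • q := rfl
    have hg2 : ContDiff ℝ 2 (c • q) := hq.const_smul c
    rw [h1, iteratedFDeriv_add_apply hψ.contDiffAt hg2.contDiffAt]
    simp [iteratedFDeriv_const_smul_apply hq.contDiffAt]
  unfold laplacian
  rw [hkey, hkey]
  ring

lemma main_bound (ψ : ℂ → ℝ) (hψ : ContDiff ℝ 2 ψ) (C K : ℝ)
    (hC : ∀ z, |ψ z| ≤ C) (hK : ∀ z, -laplacian ψ z + ψ z ≤ K) (w : ℂ) : ψ w ≤ K := by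
  apply le_of_forall_pos_le_add
  intro ε hε
  set δ : ℝ := ε / 4 with hδ
  have hδpos : 0 < δ := by positivity
  set q : ℂ → ℝ := fun u => (u - w).re ^ 2 + (u - w).im ^ 2 with hqdef
  have hq : ContDiff ℝ 2 q := contDiff_q w
  set g : ℂ → ℝ := fun u => ψ u + (-δ) * q u with hgdef
  have hgC : ContDiff ℝ 2 g := hψ.add (contDiff_const.mul hq)
  have hC0 : 0 ≤ C := le_trans (abs_nonneg _) (hC w)
  set R : ℝ := Real.sqrt ((2 * C + 1) / δ) with hRdef
  have hR2 : R ^ 2 = (2 * C + 1) / δ := Real.sq_sqrt (by positivity)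
  obtain ⟨z₁, hz₁mem, hz₁max⟩ := (isCompact_closedBall w R).exists_isMaxOn
    ⟨w, Metric.mem_closedBall_self (Real.sqrt_nonneg _)⟩ hgC.continuous.continuousOn
  have hqw : q w = 0 := by simp [hqdef]
  have hgw : g w = ψ w := by simp [hgdef, hqw]
  have hgwle : g w ≤ g z₁ := hz₁max (Metric.mem_closedBall_self (Real.sqrt_nonneg _))
  have hgz₁ : g z₁ = ψ z₁ + (-δ) * q z₁ := rfl
  have hqz₁pos : 0 ≤ q z₁ := by rw [hqdef]; positivity
  have hdiv : δ * ((2 * C + 1) / δ) = 2 * C + 1 := by field_simp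
  have hz₁ball : z₁ ∈ Metric.ball w R := by
    rw [Metric.mem_ball]
    rcases lt_or_eq_of_le (Metric.mem_closedBall.mp hz₁mem) with h | h
    · exact h
    · exfalso
      have hqz₁ : q z₁ = R ^ 2 := by
        have : q z₁ = ‖z₁ - w‖ ^ 2 := by
          rw [hqdef]; simp only [Complex.sq_norm, Complex.normSq_apply]; ring
        rw [this, show ‖z₁ - w‖ = dist z₁ w from (Complex.dist_eq z₁ w).symm, h]
      have h1 : g z₁ ≤ C - (2 * C + 1) := by
        rw [hgz₁, hqz₁, hR2]
        have := hC z₁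
        have hψle : ψ z₁ ≤ C := (abs_le.mp this).2
        nlinarith
      have h2 : -C ≤ g w := by
        rw [hgw]; linarith [(abs_le.mp (hC w)).1]
      linarith
  have hlocmax : IsLocalMax g z₁ :=
    hz₁max.isLocalMax (Metric.closedBall_mem_nhds_of_mem hz₁ball)
  have hΔg : laplacian g z₁ ≤ 0 := by
    rw [laplacian_eq_dd g hgC]
    have h1 := dd_nonpos_of_localMax hgC hlocmax 1
    have h2 := dd_nonpos_of_localMax hgC hlocmax Complex.I
    linarith
  have hlin : laplacian g z₁ = laplacian ψ z₁ + (-δ) * laplacian q z₁ :=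
    laplacian_add_smul ψ q hψ hq (-δ) z₁
  have hlq : laplacian q z₁ = 4 := laplacian_q w z₁
  have hΔψ : laplacian ψ z₁ ≤ 4 * δ := by
    rw [hlin, hlq] at hΔg; linarith
  have hchain : ψ w ≤ ψ z₁ := by
    have : g z₁ ≤ ψ z₁ := by
      rw [hgz₁]; nlinarith [mul_nonneg hδpos.le hqz₁pos]
    linarith [hgwle, hgw.symm.le]
  have hKz := hK z₁
  have : ψ w ≤ K + 4 * δ := by linarith
  linarith [this, show 4 * δ = ε by rw [hδ]; ring]

theorem stmt_0 (φ : ℂ → ℝ) (hφ : ContDiff ℝ 2 φ)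
    (hb : BddAbove (Set.range fun z : ℂ => |φ z|))
    (hb' : BddAbove (Set.range fun z : ℂ => |-laplacian φ z + φ z|)) :
    (⨆ z : ℂ, |φ z|) ≤ 4 * ⨆ z : ℂ, |-laplacian φ z + φ z| := by
  set K := ⨆ z : ℂ, |-laplacian φ z + φ z| with hKdef
  obtain ⟨C, hCub⟩ := hb
  have hC : ∀ z, |φ z| ≤ C := fun z => hCub ⟨z, rfl⟩
  have hKz : ∀ z : ℂ, |-laplacian φ z + φ z| ≤ K := fun z =>
    le_ciSup hb' z
  have h1 : ∀ w, φ w ≤ K :=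
    main_bound φ hφ C K hC (fun z => le_trans (le_abs_self _) (hKz z))
  have hlapneg : ∀ z, laplacian (fun u => -φ u) z = -laplacian φ z := by
    intro z
    unfold laplacian
    rw [show (fun u => -φ u) = -φ from rfl, iteratedFDeriv_neg_apply]
    simp
    ring
  have h2 : ∀ w, -φ w ≤ K := by
    apply main_bound (fun u => -φ u) hφ.neg C K
    · intro z; simpa [abs_neg] using hC z
    · intro z
      rw [hlapneg z]
      have : -(laplacian (φ) z) * (-1) + -φ z = -(-laplacian φ z + φ z) := by ring
      calc - -laplacian φ z + -φ z = -(-laplacian φ z + φ z) := by ring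
        _ ≤ |-laplacian φ z + φ z| := neg_le_abs _
        _ ≤ K := hKz z
  have habs : ∀ z, |φ z| ≤ K := fun z => abs_le.mpr ⟨by linarith [h2 z], h1 z⟩
  have hK0 : 0 ≤ K := le_trans (abs_nonneg _) (hKz 0)
  calc (⨆ z : ℂ, |φ z|) ≤ K := ciSup_le habs
    _ ≤ 4 * K := by linarith
end

section
/- Let u: ℂ → [0,1] be a Lebesgue measurable function. Then the limit lim_{R→∞} (1/(πR²)) · sup_{a∈ℂ} ∫_{D_R(a)} u(z) dxdy exists (as a limit of the function of the real variable R as R → ∞). -/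
open Filter MeasureTheory Metric Real

lemma vol_cb (a : ℂ) {r : ℝ} (hr : 0 ≤ r) :
    volume (closedBall a r) = ENNReal.ofReal (π * r ^ 2) := by
  rw [Complex.volume_closedBall, ENNReal.ofReal_mul Real.pi_pos.le,
    ENNReal.ofReal_pow hr, mul_comm]
  congr 1
  simp [ENNReal.ofReal, Real.toNNReal, NNReal.pi, Real.pi_pos.le]
  rfl

section aux
variable {u : ℂ → ℝ} (hu : Measurable u) (hu01 : ∀ z : ℂ, u z ∈ Set.Icc (0:ℝ) 1)

noncomputable def Iv (u : ℂ → ℝ) (a : ℂ) (r : ℝ) : ENNReal :=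
  ∫⁻ z in closedBall a r, ENNReal.ofReal (u z)

noncomputable def Mv (u : ℂ → ℝ) (r : ℝ) : ℝ := ⨆ a : ℂ, ∫ z in closedBall a r, u z

include hu01 in
lemma Iv_le_vol (a : ℂ) (r : ℝ) : Iv u a r ≤ volume (closedBall a r) := by
  calc Iv u a r ≤ ∫⁻ _ in closedBall a r, 1 := by
        apply lintegral_mono fun z => ?_
        exact ENNReal.ofReal_le_one.2 (hu01 z).2
    _ = volume (closedBall a r) := setLIntegral_one _

include hu01 in
lemma Iv_ne_top (a : ℂ) (r : ℝ) : Iv u a r ≠ ⊤ :=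
  ((Iv_le_vol hu01 a r).trans_lt (measure_closedBall_lt_top)).ne

include hu hu01 in
lemma int_eq_Iv (a : ℂ) (r : ℝ) :
    ∫ z in closedBall a r, u z = (Iv u a r).toReal := by
  apply integral_eq_lintegral_of_nonneg_ae
  · exact Eventually.of_forall fun z => (hu01 z).1
  · exact hu.aestronglyMeasurable

include hu hu01 in
lemma int_le_bound (a : ℂ) (r : ℝ) : ∫ z in closedBall a r, u z ≤ π * r ^ 2 := by
  rcases le_or_gt 0 r with hr | hr
  · rw [int_eq_Iv hu hu01]
    have h1 := (Iv_le_vol hu01 a r).trans_eq (vol_cb a hr)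
    calc (Iv u a r).toReal ≤ (ENNReal.ofReal (π * r ^ 2)).toReal :=
          ENNReal.toReal_mono ENNReal.ofReal_ne_top h1
      _ = π * r ^ 2 := ENNReal.toReal_ofReal (by positivity)
  · rw [closedBall_eq_empty.2 hr]
    simp
    positivity

include hu hu01 in
lemma bdd_range (r : ℝ) :
    BddAbove (Set.range fun a : ℂ => ∫ z in closedBall a r, u z) :=
  ⟨π * r ^ 2, Set.forall_mem_range.2 fun a => int_le_bound hu hu01 a r⟩

include hu hu01 in
lemma int_le_Mv (a : ℂ) (r : ℝ) : ∫ z in closedBall a r, u z ≤ Mv u r :=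
  le_ciSup (bdd_range hu hu01 r) a

include hu01 in
omit hu in
lemma Mv_nonneg (r : ℝ) : 0 ≤ Mv u r :=
  Real.iSup_nonneg fun a => setIntegral_nonneg measurableSet_closedBall fun z _ => (hu01 z).1

include hu hu01 in
lemma Mv_le (r : ℝ) : Mv u r ≤ π * r ^ 2 :=
  Real.iSup_le (fun a => int_le_bound hu hu01 a r) (by positivity)

include hu hu01 in
lemma Iv_le_ofReal_Mv (b : ℂ) (r : ℝ) : Iv u b r ≤ ENNReal.ofReal (Mv u r) := by
  rw [← ENNReal.ofReal_toReal (Iv_ne_top hu01 b r)]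
  exact ENNReal.ofReal_le_ofReal (by rw [← int_eq_Iv hu hu01]; exact int_le_Mv hu hu01 b r)

include hu hu01 in
lemma key (a : ℂ) {r R : ℝ} (hr : 0 < r) (hR : r < R) :
    ENNReal.ofReal (π * r ^ 2) * Iv u a (R - r) ≤
      ENNReal.ofReal (π * R ^ 2) * ENNReal.ofReal (Mv u r) := by
  set v : ℂ → ENNReal := fun z => ENNReal.ofReal (u z) with hv
  have hvm : Measurable v := hu.ennreal_ofReal
  have step1 : ENNReal.ofReal (π * r ^ 2) * Iv u a (R - r)
      = ∫⁻ z in closedBall a (R - r), volume (closedBall z r ∩ closedBall a R) * v z := by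
    rw [Iv, ← lintegral_const_mul _ hvm]
    apply setLIntegral_congr_fun measurableSet_closedBall
    intro z hz
    have hsub : closedBall z r ⊆ closedBall a R := by
      apply closedBall_subset_closedBall'
      have := mem_closedBall.1 hz
      linarith
    beta_reduce
    rw [Set.inter_eq_self_of_subset_left hsub, vol_cb z hr.le]
  have step2 : ∫⁻ z in closedBall a (R - r), volume (closedBall z r ∩ closedBall a R) * v z
      ≤ ∫⁻ z, volume (closedBall z r ∩ closedBall a R) * v z :=
    setLIntegral_le_lintegral _ _
  have step3 : ∀ z : ℂ, volume (closedBall z r ∩ closedBall a R) * v z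
      = ∫⁻ b in closedBall a R, (closedBall z r).indicator (fun _ => v z) b := by
    intro z
    rw [lintegral_indicator measurableSet_closedBall, setLIntegral_const,
      Measure.restrict_apply measurableSet_closedBall, mul_comm]
  have hmeas : AEMeasurable
      (Function.uncurry fun (z b : ℂ) => (closedBall z r).indicator (fun _ => v z) b)
      (volume.prod (volume.restrict (closedBall a R))) := by
    have heq : (Function.uncurry fun (z b : ℂ) => (closedBall z r).indicator (fun _ => v z) b)
        = fun p : ℂ × ℂ => Set.indicator {q : ℂ × ℂ | dist q.2 q.1 ≤ r} (fun q => v q.1) p := by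
      funext p
      by_cases h : dist p.2 p.1 ≤ r <;>
        simp [Function.uncurry, Set.indicator_apply, Metric.mem_closedBall, h]
    rw [heq]
    apply Measurable.aemeasurable
    apply Measurable.indicator (hvm.comp measurable_fst)
    exact measurableSet_le (continuous_dist.comp (continuous_snd.prodMk continuous_fst)).measurable
      measurable_const
  have step4 : ∫⁻ z, ∫⁻ b in closedBall a R, (closedBall z r).indicator (fun _ => v z) b
      = ∫⁻ b in closedBall a R, ∫⁻ z, (closedBall z r).indicator (fun _ => v z) b :=
    lintegral_lintegral_swap hmeas
  have step5 : ∀ b : ℂ, ∫⁻ z, (closedBall z r).indicator (fun _ => v z) b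
      ≤ ENNReal.ofReal (Mv u r) := by
    intro b
    have heq : (fun z => (closedBall z r).indicator (fun _ => v z) b)
        = (closedBall b r).indicator v := by
      funext z
      by_cases h : b ∈ closedBall z r
      · rw [Set.indicator_of_mem h, Set.indicator_of_mem (Metric.mem_closedBall_comm.mp h)]
      · rw [Set.indicator_of_notMem h,
          Set.indicator_of_notMem (fun h' => h (Metric.mem_closedBall_comm.mp h'))]
    rw [heq, lintegral_indicator measurableSet_closedBall]
    exact Iv_le_ofReal_Mv hu hu01 b r
  calc ENNReal.ofReal (π * r ^ 2) * Iv u a (R - r)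
      ≤ ∫⁻ z, volume (closedBall z r ∩ closedBall a R) * v z := step1 ▸ step2
    _ = ∫⁻ b in closedBall a R, ∫⁻ z, (closedBall z r).indicator (fun _ => v z) b := by
        simp_rw [step3]; exact step4
    _ ≤ ∫⁻ _ in closedBall a R, ENNReal.ofReal (Mv u r) :=
        lintegral_mono fun b => step5 b
    _ = ENNReal.ofReal (Mv u r) * volume (closedBall a R) := setLIntegral_const _ _
    _ = ENNReal.ofReal (π * R ^ 2) * ENNReal.ofReal (Mv u r) := by
        rw [vol_cb a (by linarith), mul_comm]

include hu hu01 in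
lemma key_int (a : ℂ) {r R : ℝ} (hr : 0 < r) (hR : r < R) :
    π * r ^ 2 * (∫ z in closedBall a (R - r), u z) ≤ π * R ^ 2 * Mv u r := by
  have h := key hu hu01 a hr hR
  have h2 := ENNReal.toReal_mono
    (ENNReal.mul_ne_top ENNReal.ofReal_ne_top ENNReal.ofReal_ne_top) h
  rw [ENNReal.toReal_mul, ENNReal.toReal_mul, ENNReal.toReal_ofReal (by positivity),
    ENNReal.toReal_ofReal (by positivity),
    ENNReal.toReal_ofReal (Mv_nonneg hu01 r)] at h2
  rw [int_eq_Iv hu hu01]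
  exact h2

include hu hu01 in
lemma key_M {r R : ℝ} (hr : 0 < r) (hR : r < R) :
    Mv u (R - r) ≤ π * R ^ 2 * Mv u r / (π * r ^ 2) := by
  apply Real.iSup_le _
    (div_nonneg (mul_nonneg (by positivity) (Mv_nonneg hu01 r)) (by positivity))
  intro a
  rw [le_div_iff₀ (by positivity)]
  calc (∫ z in closedBall a (R - r), u z) * (π * r ^ 2)
      = π * r ^ 2 * (∫ z in closedBall a (R - r), u z) := mul_comm _ _
    _ ≤ π * R ^ 2 * Mv u r := key_int hu hu01 a hr hR

end aux

theorem stmt_5 (u : ℂ → ℝ) (hu : Measurable u) (hu01 : ∀ z : ℂ, u z ∈ Set.Icc (0:ℝ) 1) :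
    ∃ L : ℝ,
      Tendsto
        (fun R : ℝ =>
          (1 / (Real.pi * R ^ 2)) * ⨆ a : ℂ, ∫ z in Metric.closedBall a R, u z)
        atTop (nhds L) := by
  set A : ℝ → ℝ := fun R => (1 / (π * R ^ 2)) * Mv u R with hA
  have hA0 : ∀ R, 0 ≤ A R := fun R =>
    mul_nonneg (by positivity) (Mv_nonneg hu01 R)
  have hA1 : ∀ R, 0 < R → A R ≤ 1 := by
    intro R hR
    show 1 / (π * R ^ 2) * Mv u R ≤ 1
    have h := Mv_le hu hu01 R
    rw [div_mul_eq_mul_div, one_mul, div_le_one (by positivity)]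
    exact h
  set s : Set ℝ := A '' Set.Ioi 0 with hs
  have hsne : s.Nonempty := ⟨A 1, 1, Set.mem_Ioi.2 one_pos, rfl⟩
  have hsbdd : BddBelow s := ⟨0, fun x ⟨R, _, hRx⟩ => hRx ▸ hA0 R⟩
  set L : ℝ := sInf s with hL
  have hL_le : ∀ S, 0 < S → L ≤ A S := fun S hS =>
    csInf_le hsbdd ⟨S, Set.mem_Ioi.2 hS, rfl⟩
  refine ⟨L, ?_⟩
  show Tendsto A atTop (nhds L)
  rw [Metric.tendsto_atTop]
  intro ε hε
  obtain ⟨x, ⟨r, hr, hrx⟩, hxlt⟩ := exists_lt_of_csInf_lt hsne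
    (show L < L + ε / 2 by linarith)
  rw [Set.mem_Ioi] at hr
  subst hrx
  refine ⟨r + 6 * r / ε + 1, fun S hS => ?_⟩
  have h6 : 0 ≤ 6 * r / ε := by positivity
  have hS0 : 0 < S := by linarith
  have hSr : r ≤ S := by linarith
  have hrS1 : r / S ≤ 1 := by rw [div_le_one hS0]; linarith
  have hrS2 : r / S ≤ ε / 6 := by
    rw [div_le_div_iff₀ hS0 (by norm_num : (0:ℝ) < 6)]
    have : 6 * r / ε ≤ S := by linarith
    rw [div_le_iff₀ hε] at this
    linarith
  have hrS0 : 0 ≤ r / S := by positivity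
  -- growth inequality: A S ≤ ((S+r)/S)^2 * A r
  have hkey := key_M hu hu01 hr (show r < S + r by linarith)
  rw [add_sub_cancel_right] at hkey
  have hAS : A S ≤ (1 + r / S) ^ 2 * A r := by
    show 1 / (π * S ^ 2) * Mv u S ≤ (1 + r / S) ^ 2 * (1 / (π * r ^ 2) * Mv u r)
    have h1 : (1 / (π * S ^ 2)) * Mv u S
        ≤ (1 / (π * S ^ 2)) * (π * (S + r) ^ 2 * Mv u r / (π * r ^ 2)) :=
      mul_le_mul_of_nonneg_left hkey (by positivity)
    refine h1.trans_eq ?_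
    have hπ : π ≠ 0 := Real.pi_ne_zero
    field_simp
  have hAr0 : 0 ≤ A r := hA0 r
  have hAr1 : A r ≤ 1 := hA1 r hr
  have hfinal : A S < L + ε := by
    have h2 : (1 + r / S) ^ 2 * A r ≤ A r + 3 * (r / S) := by
      nlinarith [sq_nonneg (r / S)]
    nlinarith
  have hLS : L ≤ A S := hL_le S hS0
  rw [Real.dist_eq, abs_lt]
  constructor <;> linarith
end

section
/- Let u: ℂ → [0,1] be a Lebesgue measurable function, and let ρ(u) := lim_{R→∞} (1/(πR²)) · sup_{a∈ℂ} ∫_{D_R(a)} u dxdy (this limit exists). Then the limit lim_{R→∞} (1/R²) · sup_{a,b∈ℝ} ∫_{[a,a+R]×[b,b+R]} u dxdy also exists, and it equals ρ(u). -/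
open Filter MeasureTheory

/-- The closed square `[a, a+R] × [b, b+R]` inside `ℂ ≅ ℝ²`. -/
def closedSquare (a b R : ℝ) : Set ℂ :=
  {z : ℂ | z.re ∈ Set.Icc a (a + R) ∧ z.im ∈ Set.Icc b (b + R)}

namespace Stmt6Aux

open Metric Set Complex
open scoped ENNReal NNReal

lemma measurableSet_closedSquare (a b R : ℝ) : MeasurableSet (closedSquare a b R) :=
  (Complex.measurable_re measurableSet_Icc).inter (Complex.measurable_im measurableSet_Icc)

lemma closedSquare_eq (a b R : ℝ) :
    closedSquare a b R
      = Complex.measurableEquivRealProd ⁻¹' (Set.Icc a (a + R) ×ˢ Set.Icc b (b + R)) := by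
  ext z
  simp [closedSquare, Set.mem_prod]
  tauto

lemma volume_closedSquare (a b R : ℝ) :
    volume (closedSquare a b R) = ENNReal.ofReal R * ENNReal.ofReal R := by
  rw [closedSquare_eq,
    Complex.volume_preserving_equiv_real_prod.measure_preimage
      ((measurableSet_Icc.prod measurableSet_Icc).nullMeasurableSet)]
  rw [show (volume : Measure (ℝ × ℝ)) = (volume : Measure ℝ).prod volume from rfl,
    Measure.prod_prod, Real.volume_Icc, Real.volume_Icc, add_sub_cancel_left,
    add_sub_cancel_left]

lemma volume_closedSquare_ne_top (a b R : ℝ) : volume (closedSquare a b R) ≠ ⊤ := by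
  rw [volume_closedSquare]
  exact ENNReal.mul_ne_top ENNReal.ofReal_ne_top ENNReal.ofReal_ne_top

variable {u : ℂ → ℝ} (hu : Measurable u) (hu0 : ∀ z, 0 ≤ u z) (hu1 : ∀ z, u z ≤ 1)

section
include hu hu0 hu1

lemma int_le_vol (S : Set ℂ) (hS : volume S ≠ ⊤) :
    ∫ z in S, u z ≤ (volume S).toReal := by
  have h1 : IntegrableOn (fun _ : ℂ => (1 : ℝ)) S := by
    rw [integrableOn_const_iff (C := (1:ℝ))]
    exact Or.inr hS.lt_top
  have hi : IntegrableOn u S := by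
    refine h1.mono' hu.aestronglyMeasurable ?_
    exact Eventually.of_forall fun z => by
      rw [Real.norm_eq_abs, _root_.abs_of_nonneg (hu0 z)]; exact hu1 z
  calc ∫ z in S, u z ≤ ∫ _ in S, (1 : ℝ) := integral_mono hi h1 hu1
    _ = (volume S).toReal := by simp [Measure.real]

lemma bdd_disc (r : ℝ) :
    BddAbove (Set.range fun a : ℂ => ∫ z in closedBall a r, u z) := by
  refine ⟨(volume (closedBall (0:ℂ) r)).toReal, ?_⟩
  rintro x ⟨a, rfl⟩
  refine (int_le_vol hu hu0 hu1 _ ?_).trans_eq ?_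
  · exact (isCompact_closedBall a r).measure_lt_top.ne
  · rw [Complex.volume_closedBall, Complex.volume_closedBall]

lemma bdd_square (s : ℝ) :
    BddAbove (Set.range fun p : ℝ × ℝ => ∫ z in closedSquare p.1 p.2 s, u z) := by
  refine ⟨(ENNReal.ofReal s * ENNReal.ofReal s).toReal, ?_⟩
  rintro x ⟨p, rfl⟩
  exact (int_le_vol hu hu0 hu1 _ (volume_closedSquare_ne_top _ _ _)).trans_eq
    (by rw [volume_closedSquare])

lemma disc_sup_nonneg (r : ℝ) :
    0 ≤ ⨆ a : ℂ, ∫ z in closedBall a r, u z :=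
  le_trans (integral_nonneg hu0) (le_ciSup (bdd_disc hu hu0 hu1 r) 0)

lemma square_sup_nonneg (s : ℝ) :
    0 ≤ ⨆ p : ℝ × ℝ, ∫ z in closedSquare p.1 p.2 s, u z :=
  le_trans (integral_nonneg hu0) (le_ciSup (bdd_square hu hu0 hu1 s) (0, 0))

/-- The key averaging estimate. -/
lemma key (K T E : Set ℂ) (hK : MeasurableSet K) (hT : MeasurableSet T)
    (hKfin : volume K ≠ ⊤) (hEfin : volume E ≠ ⊤)
    (hsub : ∀ z ∈ T, {t : ℂ | z - t ∈ K} ⊆ E)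
    (M : ℝ) (hM0 : 0 ≤ M)
    (hM : ∀ t : ℂ, ∫ z in {z : ℂ | z - t ∈ K}, u z ≤ M) :
    (volume K).toReal * ∫ z in T, u z ≤ (volume E).toReal * M := by
  set g : ℂ → ℝ≥0∞ := fun z => ENNReal.ofReal (u z) with hgdef
  have hgm : Measurable g := ENNReal.measurable_ofReal.comp hu
  have hg1 : ∀ z, g z ≤ 1 := fun z => ENNReal.ofReal_le_one.2 (hu1 z)
  have hint : ∀ S : Set ℂ, ∫ z in S, u z = (∫⁻ z in S, g z).toReal := by
    intro S
    rw [integral_eq_lintegral_of_nonneg_ae (Eventually.of_forall hu0)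
      hu.aestronglyMeasurable]
  have hbound : ∀ S : Set ℂ, ∫⁻ z in S, g z ≤ volume S := by
    intro S
    calc ∫⁻ z in S, g z ≤ ∫⁻ _ in S, 1 := lintegral_mono fun z => hg1 z
      _ = volume S := by simp
  have hpre : ∀ t : ℂ, MeasurableSet {z : ℂ | z - t ∈ K} :=
    fun t => (measurable_sub_const t) hK
  have hpre' : ∀ z : ℂ, MeasurableSet {t : ℂ | z - t ∈ K} :=
    fun z => (measurable_const_sub z) hK
  have hvolpre : ∀ t : ℂ, volume {z : ℂ | z - t ∈ K} = volume K := by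
    intro t
    have mp : MeasurePreserving (fun z : ℂ => z - t) volume volume := by
      have := measurePreserving_add_right (volume : Measure ℂ) (-t)
      simpa [sub_eq_add_neg] using this
    exact mp.measure_preimage hK.nullMeasurableSet
  have hvolpre' : ∀ z : ℂ, volume {t : ℂ | z - t ∈ K} = volume K := by
    intro z
    have mp : MeasurePreserving (fun t : ℂ => z - t) volume volume := by
      have h1 := measurePreserving_add_left (volume : Measure ℂ) z
      have h2 := Measure.measurePreserving_neg (volume : Measure ℂ)
      simpa [Function.comp_def, sub_eq_add_neg] using h1.comp h2
    exact mp.measure_preimage hK.nullMeasurableSet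
  -- main inequality in ℝ≥0∞
  have main : volume K * ∫⁻ z in T, g z ≤ volume E * ENNReal.ofReal M := by
    have e1 : ∀ t : ℂ, ∫⁻ z in {z : ℂ | z - t ∈ K}, g z
        = ∫⁻ z, K.indicator 1 (z - t) * g z := by
      intro t
      rw [← lintegral_indicator (hpre t)]
      congr 1
      ext z
      by_cases h : z - t ∈ K <;> simp [Set.indicator, h]
    have e2 : ∀ z : ℂ, (∫⁻ t in E, K.indicator 1 (z - t) * g z)
        = g z * volume (E ∩ {t : ℂ | z - t ∈ K}) := by
      intro z
      have hmeas : Measurable fun t : ℂ => K.indicator (1 : ℂ → ℝ≥0∞) (z - t) :=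
        (measurable_one.indicator hK).comp (measurable_const_sub z)
      rw [lintegral_mul_const _ hmeas, mul_comm]
      congr 1
      have : (fun t : ℂ => K.indicator (1 : ℂ → ℝ≥0∞) (z - t))
          = ({t : ℂ | z - t ∈ K}).indicator 1 := by
        ext t
        by_cases h : z - t ∈ K <;> simp [Set.indicator, h]
      rw [this, lintegral_indicator (hpre' z)]
      simp [Measure.restrict_apply (hpre' z), Set.inter_comm]
    have swap : (∫⁻ t in E, ∫⁻ z, K.indicator 1 (z - t) * g z)
        = ∫⁻ z, ∫⁻ t in E, K.indicator 1 (z - t) * g z := by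
      have hm : Measurable (Function.uncurry fun t z : ℂ => K.indicator 1 (z - t) * g z) := by
        apply Measurable.mul
        · exact (measurable_one.indicator hK).comp (measurable_snd.sub measurable_fst)
        · exact hgm.comp measurable_snd
      exact lintegral_lintegral_swap hm.aemeasurable
    calc volume K * ∫⁻ z in T, g z
        = ∫⁻ z in T, g z * volume K := by
          rw [lintegral_mul_const _ hgm, mul_comm]
      _ = ∫⁻ z in T, g z * volume (E ∩ {t : ℂ | z - t ∈ K}) := by
          refine setLIntegral_congr_fun hT (fun z hz => ?_)
          rw [Set.inter_eq_right.2 (hsub z hz), hvolpre' z]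
      _ ≤ ∫⁻ z, g z * volume (E ∩ {t : ℂ | z - t ∈ K}) := setLIntegral_le_lintegral _ _
      _ = ∫⁻ z, ∫⁻ t in E, K.indicator 1 (z - t) * g z := by
          refine lintegral_congr fun z => (e2 z).symm
      _ = ∫⁻ t in E, ∫⁻ z, K.indicator 1 (z - t) * g z := swap.symm
      _ = ∫⁻ t in E, ∫⁻ z in {z : ℂ | z - t ∈ K}, g z := by
          refine lintegral_congr fun t => (e1 t).symm
      _ ≤ ∫⁻ _ in E, ENNReal.ofReal M := by
          refine lintegral_mono fun t => ?_
          have hfin : (∫⁻ z in {z : ℂ | z - t ∈ K}, g z) ≠ ⊤ :=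
            ((hbound _).trans_eq (hvolpre t)).trans_lt hKfin.lt_top |>.ne
          rw [← ENNReal.ofReal_toReal hfin]
          exact ENNReal.ofReal_le_ofReal (by rw [← hint]; exact hM t)
      _ = ENNReal.ofReal M * volume E := setLIntegral_const E _
      _ = volume E * ENNReal.ofReal M := mul_comm _ _
  -- convert to real numbers
  have hfinL : volume K * ∫⁻ z in T, g z ≠ ⊤ ∨ True := Or.inr trivial
  have h1 : (volume K * ∫⁻ z in T, g z).toReal ≤ (volume E * ENNReal.ofReal M).toReal := by
    refine ENNReal.toReal_mono ?_ main
    exact ENNReal.mul_ne_top hEfin ENNReal.ofReal_ne_top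
  rw [ENNReal.toReal_mul, ENNReal.toReal_mul, ENNReal.toReal_ofReal hM0] at h1
  rw [hint T]
  exact h1

/-- squares controlled by discs -/
lemma square_le_disc {R r : ℝ} (hR : 0 < R) (hr : 0 < r) :
    (⨆ p : ℝ × ℝ, ∫ z in closedSquare p.1 p.2 R, u z)
      ≤ ((R + 2*r)^2 / (Real.pi * r^2)) * ⨆ a : ℂ, ∫ z in closedBall a r, u z := by
  set M : ℝ := ⨆ a : ℂ, ∫ z in closedBall a r, u z with hMdef
  have hM0 : 0 ≤ M := disc_sup_nonneg hu hu0 hu1 r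
  refine ciSup_le fun p => ?_
  have hsetK : ∀ t : ℂ, {z : ℂ | z - t ∈ closedBall (0:ℂ) r} = closedBall t r := by
    intro t
    ext z
    simp [Complex.dist_eq, Set.mem_setOf_eq]
  have hkey := key hu hu0 hu1 (closedBall (0:ℂ) r) (closedSquare p.1 p.2 R)
    (closedSquare (p.1 - r) (p.2 - r) (R + 2*r))
    measurableSet_closedBall (measurableSet_closedSquare _ _ _)
    (isCompact_closedBall _ _).measure_lt_top.ne
    (volume_closedSquare_ne_top _ _ _)
    (fun z hz t ht => by
      simp only [Set.mem_setOf_eq, Metric.mem_closedBall, Complex.dist_eq, sub_zero] at ht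
      have hre : |(z - t).re| ≤ r := (Complex.abs_re_le_norm _).trans ht
      have him : |(z - t).im| ≤ r := (Complex.abs_im_le_norm _).trans ht
      rw [Complex.sub_re] at hre
      rw [Complex.sub_im] at him
      obtain ⟨⟨h1, h2⟩, h3, h4⟩ := hz
      rw [abs_le] at hre him
      exact ⟨⟨by linarith [hre.1, hre.2], by linarith [hre.1, hre.2]⟩,
        ⟨by linarith [him.1, him.2], by linarith [him.1, him.2]⟩⟩)
    M hM0
    (fun t => by
      rw [hsetK t]
      exact le_ciSup (bdd_disc hu hu0 hu1 r) t)
  rw [Complex.volume_closedBall, volume_closedSquare] at hkey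
  have hvol : ((ENNReal.ofReal r) ^ 2 * (NNReal.pi : ℝ≥0∞)).toReal = Real.pi * r ^ 2 := by
    rw [ENNReal.toReal_mul, ENNReal.toReal_pow, ENNReal.toReal_ofReal hr.le]
    simp [mul_comm]
  have hvol2 : (ENNReal.ofReal (R + 2*r) * ENNReal.ofReal (R + 2*r)).toReal = (R + 2*r)^2 := by
    rw [ENNReal.toReal_mul, ENNReal.toReal_ofReal (by linarith)]
    ring
  rw [hvol, hvol2] at hkey
  have hpos : 0 < Real.pi * r ^ 2 := by positivity
  rw [div_mul_eq_mul_div, le_div_iff₀ hpos, mul_comm (∫ z in closedSquare p.1 p.2 R, u z)]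
  exact hkey

/-- discs controlled by squares -/
lemma disc_le_square {L s : ℝ} (hL : 0 < L) (hs : 0 < s) :
    (⨆ a : ℂ, ∫ z in closedBall a L, u z)
      ≤ ((Real.pi * (L + 2*s)^2) / s^2) * ⨆ p : ℝ × ℝ, ∫ z in closedSquare p.1 p.2 s, u z := by
  set M : ℝ := ⨆ p : ℝ × ℝ, ∫ z in closedSquare p.1 p.2 s, u z with hMdef
  have hM0 : 0 ≤ M := square_sup_nonneg hu hu0 hu1 s
  refine ciSup_le fun a => ?_
  have hsetK : ∀ t : ℂ, {z : ℂ | z - t ∈ closedSquare 0 0 s} = closedSquare t.re t.im s := by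
    intro t
    ext z
    simp only [closedSquare, Set.mem_setOf_eq, Complex.sub_re, Complex.sub_im, Set.mem_Icc,
      zero_add]
    constructor
    · rintro ⟨⟨h1, h2⟩, h3, h4⟩
      exact ⟨⟨by linarith, by linarith⟩, ⟨by linarith, by linarith⟩⟩
    · rintro ⟨⟨h1, h2⟩, h3, h4⟩
      exact ⟨⟨by linarith, by linarith⟩, ⟨by linarith, by linarith⟩⟩
  have hkey := key hu hu0 hu1 (closedSquare 0 0 s) (closedBall a L)
    (closedBall a (L + 2*s))
    (measurableSet_closedSquare _ _ _) measurableSet_closedBall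
    (volume_closedSquare_ne_top _ _ _)
    (isCompact_closedBall _ _).measure_lt_top.ne
    (fun z hz t ht => by
      simp only [Set.mem_setOf_eq] at ht
      obtain ⟨⟨h1, h2⟩, h3, h4⟩ := ht
      rw [zero_add] at h2 h4
      rw [Complex.sub_re] at h1 h2
      rw [Complex.sub_im] at h3 h4
      have habs : ‖z - t‖ ≤ 2 * s := by
        refine (Complex.norm_le_abs_re_add_abs_im _).trans ?_
        rw [Complex.sub_re, Complex.sub_im, _root_.abs_of_nonneg (by linarith),
          _root_.abs_of_nonneg (by linarith)]
        linarith
      rw [Metric.mem_closedBall] at hz ⊢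
      calc dist t a ≤ dist t z + dist z a := dist_triangle _ _ _
        _ ≤ 2 * s + L := by
            refine add_le_add ?_ hz
            rw [dist_comm, Complex.dist_eq]
            exact habs
        _ = L + 2 * s := by ring)
    M hM0
    (fun t => by
      rw [hsetK t]
      exact le_ciSup (bdd_square hu hu0 hu1 s) (t.re, t.im))
  rw [volume_closedSquare, Complex.volume_closedBall] at hkey
  have hvol : (ENNReal.ofReal s * ENNReal.ofReal s).toReal = s^2 := by
    rw [ENNReal.toReal_mul, ENNReal.toReal_ofReal hs.le]; ring
  have hvol2 : ((ENNReal.ofReal (L + 2*s)) ^ 2 * (NNReal.pi : ℝ≥0∞)).toReal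
      = Real.pi * (L + 2*s) ^ 2 := by
    rw [ENNReal.toReal_mul, ENNReal.toReal_pow, ENNReal.toReal_ofReal (by linarith)]
    simp [mul_comm]
  rw [hvol, hvol2] at hkey
  have hpos : 0 < s ^ 2 := by positivity
  rw [div_mul_eq_mul_div, le_div_iff₀ hpos, mul_comm (∫ z in closedBall a L, u z)]
  exact hkey

end

end Stmt6Aux

theorem stmt_6 (u : ℂ → ℝ) (hu : Measurable u) (hu01 : ∀ z : ℂ, u z ∈ Set.Icc (0:ℝ) 1)
    (ρ : ℝ)
    (hρ : Tendsto
      (fun R : ℝ =>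
        (1 / (Real.pi * R ^ 2)) * ⨆ a : ℂ, ∫ z in Metric.closedBall a R, u z)
      atTop (nhds ρ)) :
    Tendsto
      (fun R : ℝ =>
        (1 / R ^ 2) * ⨆ p : ℝ × ℝ, ∫ z in closedSquare p.1 p.2 R, u z)
      atTop (nhds ρ) := by
  have hu0 : ∀ z, 0 ≤ u z := fun z => (hu01 z).1
  have hu1 : ∀ z, u z ≤ 1 := fun z => (hu01 z).2
  set F : ℝ → ℝ := fun r => ⨆ a : ℂ, ∫ z in Metric.closedBall a r, u z with hFdef
  set G : ℝ → ℝ := fun s => ⨆ p : ℝ × ℝ, ∫ z in closedSquare p.1 p.2 s, u z with hGdef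
  -- lower bound : ρ ≤ G s / s² for all s > 0
  have hlow : ∀ s : ℝ, 0 < s → ρ ≤ (1 / s^2) * G s := by
    intro s hs
    have hGs0 : 0 ≤ (1 / s^2) * G s := by
      have := Stmt6Aux.square_sup_nonneg hu hu0 hu1 s
      positivity
    have hev : ∀ᶠ L in atTop, (1 / (Real.pi * L ^ 2)) * F L
        ≤ (1 + 2*s/L)^2 * ((1 / s^2) * G s) := by
      filter_upwards [eventually_gt_atTop (0:ℝ)] with L hL
      have h1 := Stmt6Aux.disc_le_square hu hu0 hu1 hL hs
      have hπ : 0 < Real.pi := Real.pi_pos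
      have h2 : (1 / (Real.pi * L ^ 2)) * F L
          ≤ (1 / (Real.pi * L ^ 2)) * (((Real.pi * (L + 2*s)^2) / s^2) * G s) := by
        apply mul_le_mul_of_nonneg_left h1 (by positivity)
      refine h2.trans_eq ?_
      have hLne : L ≠ 0 := hL.ne'
      field_simp
    have hlim : Tendsto (fun L : ℝ => (1 + 2*s/L)^2 * ((1 / s^2) * G s)) atTop
        (nhds ((1 + 0)^2 * ((1 / s^2) * G s))) := by
      refine Tendsto.mul_const _ ?_
      refine Tendsto.pow ?_ 2
      exact tendsto_const_nhds.add (Tendsto.div_atTop tendsto_const_nhds tendsto_id)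
    have := le_of_tendsto_of_tendsto hρ hlim hev
    simpa using this
  -- upper bound function
  have hsqrt : Tendsto Real.sqrt atTop atTop := by
    refine tendsto_atTop_atTop.2 fun b => ⟨max (b^2) 0, fun x hx => ?_⟩
    have h1 : b^2 ≤ x := le_trans (le_max_left _ _) hx
    have h2 : (0:ℝ) ≤ x := le_trans (le_max_right _ _) hx
    calc b ≤ |b| := le_abs_self b
      _ = Real.sqrt (b^2) := (Real.sqrt_sq_eq_abs b).symm
      _ ≤ Real.sqrt x := Real.sqrt_le_sqrt h1
  have hupper : Tendsto (fun L : ℝ => (1 + 2 / Real.sqrt L)^2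
      * ((1 / (Real.pi * (Real.sqrt L) ^ 2)) * F (Real.sqrt L))) atTop (nhds ρ) := by
    have h1 : Tendsto (fun L : ℝ => (1 / (Real.pi * (Real.sqrt L) ^ 2)) * F (Real.sqrt L))
        atTop (nhds ρ) := hρ.comp hsqrt
    have h2 : Tendsto (fun L : ℝ => (1 + 2 / Real.sqrt L)^2) atTop (nhds ((1+0)^2)) := by
      refine Tendsto.pow ?_ 2
      exact tendsto_const_nhds.add (Tendsto.div_atTop tendsto_const_nhds hsqrt)
    have := h2.mul h1
    convert this using 2
    norm_num
  -- eventual upper estimate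
  have hev_up : ∀ᶠ L in atTop, (1 / L^2) * G L
      ≤ (1 + 2 / Real.sqrt L)^2 * ((1 / (Real.pi * (Real.sqrt L) ^ 2)) * F (Real.sqrt L)) := by
    filter_upwards [eventually_gt_atTop (0:ℝ)] with L hL
    have hr : 0 < Real.sqrt L := Real.sqrt_pos.2 hL
    have h1 := Stmt6Aux.square_le_disc hu hu0 hu1 hL hr
    have h2 : (1 / L^2) * G L
        ≤ (1 / L^2) * (((L + 2*Real.sqrt L)^2 / (Real.pi * (Real.sqrt L)^2)) * F (Real.sqrt L)) := by
      apply mul_le_mul_of_nonneg_left h1 (by positivity)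
    refine h2.trans_eq ?_
    set r := Real.sqrt L with hrdef
    have hLs : r * r = L := Real.mul_self_sqrt hL.le
    have hr0 : r ≠ 0 := hr.ne'
    have hπ : Real.pi ≠ 0 := Real.pi_ne_zero
    rw [← hLs]
    field_simp
  -- eventual lower estimate
  have hev_low : ∀ᶠ L in atTop, ρ ≤ (1 / L^2) * G L := by
    filter_upwards [eventually_gt_atTop (0:ℝ)] with L hL
    exact hlow L hL
  exact tendsto_of_tendsto_of_tendsto_of_le_of_le' tendsto_const_nhds hupper hev_low hev_up
end

section
/- Let u: ℂ → [0,1] be a Lebesgue measurable function, and let ρ(u) := lim_{R→∞} (1/(πR²)) · sup_{a∈ℂ} ∫_{D_R(a)} u dxdy (this limit exists). Define T(r) := ∫₁^r (∫_{D_t(0)} u dxdy) dt/t for r ≥ 1. Then limsup_{r→∞} (2/(πr²)) T(r) ≤ limsup_{R→∞} (1/(πR²)) ∫_{D_R(0)} u dxdy ≤ ρ(u). -/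
open Filter MeasureTheory Metric

theorem stmt_7 (u : ℂ → ℝ) (hu : Measurable u) (hu01 : ∀ z : ℂ, u z ∈ Set.Icc (0:ℝ) 1)
    (ρ : ℝ)
    (hρ : Tendsto
      (fun R : ℝ =>
        (1 / (Real.pi * R ^ 2)) * ⨆ a : ℂ, ∫ z in Metric.closedBall a R, u z)
      atTop (nhds ρ))
    (T : ℝ → ℝ)
    (hT : ∀ r : ℝ, 1 ≤ r →
      T r = ∫ t in (1:ℝ)..r, (∫ z in Metric.closedBall (0:ℂ) t, u z) / t) :
    limsup (fun r : ℝ => (2 / (Real.pi * r ^ 2)) * T r) atTop ≤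
      limsup (fun R : ℝ =>
        (1 / (Real.pi * R ^ 2)) * ∫ z in Metric.closedBall (0:ℂ) R, u z) atTop ∧
    limsup (fun R : ℝ =>
        (1 / (Real.pi * R ^ 2)) * ∫ z in Metric.closedBall (0:ℂ) R, u z) atTop ≤ ρ := by
  have pi_pos := Real.pi_pos
  -- integrability on balls
  have hi : ∀ (a : ℂ) (t : ℝ), IntegrableOn u (closedBall a t) := by
    intro a t
    apply Measure.integrableOn_of_bounded (M := 1) measure_closedBall_lt_top.ne
      hu.aestronglyMeasurable
    filter_upwards with z
    rw [Real.norm_eq_abs, abs_le]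
    exact ⟨le_trans (by norm_num) (hu01 z).1, (hu01 z).2⟩
  set A : ℝ → ℝ := fun t => ∫ z in closedBall (0:ℂ) t, u z with hAdef
  have hA0 : ∀ (a : ℂ) (t : ℝ), 0 ≤ ∫ z in closedBall a t, u z := fun a t =>
    setIntegral_nonneg measurableSet_closedBall (fun z _ => (hu01 z).1)
  have hAle : ∀ (a : ℂ) (t : ℝ), 0 ≤ t → ∫ z in closedBall a t, u z ≤ Real.pi * t ^ 2 := by
    intro a t ht
    have h1 : ∫ z in closedBall a t, u z ≤ ∫ _z in closedBall a t, (1:ℝ) :=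
      setIntegral_mono_on (hi a t) (integrableOn_const measure_closedBall_lt_top.ne)
        measurableSet_closedBall (fun z _ => (hu01 z).2)
    rw [setIntegral_const, smul_eq_mul, mul_one] at h1
    refine h1.trans ?_
    rw [measureReal_def, Complex.volume_closedBall, ENNReal.toReal_mul]
    simp [ENNReal.toReal_pow, ENNReal.toReal_ofReal ht]
    ring_nf
    exact le_rfl
  have hmono : Monotone A := by
    intro s t hst
    exact setIntegral_mono_set (hi 0 t)
      (Eventually.of_forall (fun z => (hu01 z).1))
      (HasSubset.Subset.eventuallyLE (closedBall_subset_closedBall hst))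
  set g : ℝ → ℝ := fun R => (1 / (Real.pi * R ^ 2)) * A R with hgdef
  -- g bounded in [0,1] eventually
  have hg_ev01 : ∀ᶠ R in atTop, g R ∈ Set.Icc (0:ℝ) 1 := by
    filter_upwards [eventually_ge_atTop (1:ℝ)] with R hR
    have hR0 : (0:ℝ) < R := lt_of_lt_of_le one_pos hR
    have hpos : 0 < Real.pi * R ^ 2 := by positivity
    constructor
    · exact mul_nonneg (by positivity) (hA0 0 R)
    · calc (1 / (Real.pi * R ^ 2)) * A R ≤ (1 / (Real.pi * R ^ 2)) * (Real.pi * R ^ 2) :=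
          mul_le_mul_of_nonneg_left (hAle 0 R hR0.le) (by positivity)
        _ = 1 := by field_simp
  have hg_bdd_le : IsBoundedUnder (· ≤ ·) atTop g :=
    isBoundedUnder_of_eventually_le (hg_ev01.mono fun R h => h.2)
  have hg_cobdd : IsCoboundedUnder (· ≤ ·) atTop g :=
    isCoboundedUnder_le_of_eventually_le atTop (x := 0) (hg_ev01.mono fun R h => h.1)
  set L := limsup g atTop with hLdef
  have hL0 : 0 ≤ L := by
    refine le_limsup_of_frequently_le ?_ hg_bdd_le
    exact (hg_ev01.mono fun R h => h.1).frequently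
  constructor
  · -- main inequality
    have hii : ∀ a b : ℝ, 1 ≤ a → 1 ≤ b → IntervalIntegrable (fun t => A t / t) volume a b := by
      intro a b ha hb
      have h1 : IntervalIntegrable A volume a b := hmono.intervalIntegrable
      have h2 : ContinuousOn (fun t : ℝ => t⁻¹) (Set.uIcc a b) := by
        apply ContinuousOn.inv₀ continuousOn_id
        intro t ht
        have h3 : (1:ℝ) ≤ a ⊓ b := le_inf ha hb
        have h4 : a ⊓ b ≤ t := ht.1
        intro h; simp only [id_eq] at h; rw [h] at h4; linarith
      simpa [div_eq_mul_inv] using h1.mul_continuousOn h2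
    have hT0 : ∀ᶠ r in atTop, 0 ≤ (2 / (Real.pi * r ^ 2)) * T r := by
      filter_upwards [eventually_ge_atTop (1:ℝ)] with r hr
      have hTr : 0 ≤ T r := by
        rw [hT r hr]
        apply intervalIntegral.integral_nonneg hr
        intro t ht
        exact div_nonneg (hA0 0 t) (le_trans zero_le_one ht.1)
      have h5 : 0 ≤ 2 / (Real.pi * r ^ 2) := by positivity
      exact mul_nonneg h5 hTr
    have hfT_cobdd : IsCoboundedUnder (· ≤ ·) atTop
        (fun r : ℝ => (2 / (Real.pi * r ^ 2)) * T r) :=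
      isCoboundedUnder_le_of_eventually_le atTop (x := 0) hT0
    refine le_of_forall_pos_le_add ?_
    intro ε hε
    have hev : ∀ᶠ R in atTop, g R < L + ε :=
      eventually_lt_of_limsup_lt (by rw [← hLdef]; linarith) hg_bdd_le
    obtain ⟨r₀, h₀⟩ := eventually_atTop.1 hev
    set s : ℝ := max r₀ 1 with hsdef
    have h1s : (1:ℝ) ≤ s := le_max_right _ _
    have hAb : ∀ t, s ≤ t → A t ≤ (L + ε) * (Real.pi * t ^ 2) := by
      intro t ht
      have h1 : g t < L + ε := h₀ t (le_trans (le_max_left _ _) ht)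
      have ht1 : (1:ℝ) ≤ t := le_trans h1s ht
      have hpos : 0 < Real.pi * t ^ 2 := by positivity
      simp only [hgdef] at h1
      have h2 := mul_lt_mul_of_pos_right h1 hpos
      have h3 : 1 / (Real.pi * t ^ 2) * A t * (Real.pi * t ^ 2) = A t := by field_simp
      rw [h3] at h2
      linarith
    have hkey : ∀ᶠ r in atTop, (2 / (Real.pi * r ^ 2)) * T r ≤
        (2 / (Real.pi * r ^ 2)) * T s + (L + ε) := by
      filter_upwards [eventually_ge_atTop s] with r hr
      have h1r : (1:ℝ) ≤ r := le_trans h1s hr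
      have hrpos : (0:ℝ) < r := lt_of_lt_of_le one_pos h1r
      have hsplit : T r = T s + ∫ t in s..r, A t / t := by
        rw [hT r h1r, hT s h1s,
          ← intervalIntegral.integral_add_adjacent_intervals (hii 1 s le_rfl h1s)
            (hii s r h1s h1r)]
      have hmid : ∫ t in s..r, A t / t ≤ (L + ε) * Real.pi * ((r ^ 2 - s ^ 2) / 2) := by
        have hmono2 : ∫ t in s..r, A t / t ≤ ∫ t in s..r, (L + ε) * Real.pi * t := by
          apply intervalIntegral.integral_mono_on hr (hii s r h1s h1r)
            (((continuous_const.mul continuous_id).intervalIntegrable s r))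
          intro t ht
          have hts : s ≤ t := ht.1
          have ht0 : (0:ℝ) < t := lt_of_lt_of_le (lt_of_lt_of_le one_pos h1s) hts
          rw [div_le_iff₀ ht0]
          have h6 := hAb t hts
          simp only [Pi.mul_apply, id_eq]
          nlinarith
        refine hmono2.trans ?_
        rw [intervalIntegral.integral_const_mul, integral_id]
      have hc : 0 ≤ 2 / (Real.pi * r ^ 2) := by positivity
      have h4 : 2 / (Real.pi * r ^ 2) * ((L + ε) * Real.pi * ((r ^ 2 - s ^ 2) / 2)) ≤ L + ε := by
        have he : 2 / (Real.pi * r ^ 2) * ((L + ε) * Real.pi * ((r ^ 2 - s ^ 2) / 2)) =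
            (L + ε) * ((r ^ 2 - s ^ 2) / r ^ 2) := by
          field_simp
        rw [he]
        have h7 : (r ^ 2 - s ^ 2) / r ^ 2 ≤ 1 := by
          rw [div_le_one (by positivity)]
          nlinarith [sq_nonneg s]
        have h8 : 0 ≤ (L + ε) := by linarith
        nlinarith [div_nonneg (sub_nonneg.2 (sq_le_sq' (by linarith [neg_nonpos_of_nonneg (le_trans zero_le_one h1s)]) hr)) (sq_nonneg r)]
      have h9 := mul_le_mul_of_nonneg_left hmid hc
      calc (2 / (Real.pi * r ^ 2)) * T r
          = 2 / (Real.pi * r ^ 2) * T s + 2 / (Real.pi * r ^ 2) * ∫ t in s..r, A t / t := by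
            rw [hsplit]; ring
        _ ≤ 2 / (Real.pi * r ^ 2) * T s + (L + ε) := by linarith
    have htend : Tendsto (fun r : ℝ => (2 / (Real.pi * r ^ 2)) * T s + (L + ε)) atTop
        (nhds (L + ε)) := by
      have hz : Tendsto (fun r : ℝ => 2 / (Real.pi * r ^ 2)) atTop (nhds 0) := by
        apply Tendsto.div_atTop tendsto_const_nhds
        exact (tendsto_pow_atTop two_ne_zero).const_mul_atTop pi_pos
      have := (hz.mul_const (T s)).add_const (L + ε)
      simpa using this
    calc limsup (fun r : ℝ => (2 / (Real.pi * r ^ 2)) * T r) atTop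
        ≤ limsup (fun r : ℝ => (2 / (Real.pi * r ^ 2)) * T s + (L + ε)) atTop :=
          limsup_le_limsup hkey hfT_cobdd htend.isBoundedUnder_le
      _ = L + ε := htend.limsup_eq
  · -- second inequality
    have hptwise : ∀ᶠ R in atTop, g R ≤
        (1 / (Real.pi * R ^ 2)) * ⨆ a : ℂ, ∫ z in Metric.closedBall a R, u z := by
      filter_upwards [eventually_ge_atTop (1:ℝ)] with R hR
      have hR0 : (0:ℝ) < R := lt_of_lt_of_le one_pos hR
      have hbdd : BddAbove (Set.range fun a : ℂ => ∫ z in Metric.closedBall a R, u z) :=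
        ⟨Real.pi * R ^ 2, by rintro x ⟨a, rfl⟩; exact hAle a R hR0.le⟩
      exact mul_le_mul_of_nonneg_left (le_ciSup hbdd 0) (by positivity)
    calc limsup g atTop ≤ limsup (fun R : ℝ =>
        (1 / (Real.pi * R ^ 2)) * ⨆ a : ℂ, ∫ z in Metric.closedBall a R, u z) atTop :=
          limsup_le_limsup hptwise hg_cobdd hρ.isBoundedUnder_le
      _ = ρ := hρ.limsup_eq
end

section
/- Let N ≥ 1 and let f₁, …, f_N be holomorphic functions on an open set U ⊆ ℂ. Then for every z ∈ U, Δ_z log(1 + Σ_{i=1}^N |f_i(z)|²) = 4 · (Σ_{i=1}^N |f_i'(z)|² + Σ_{1≤i<j≤N} |f_i'(z)f_j(z) − f_i(z)f_j'(z)|²) / (1 + Σ_{i=1}^N |f_i(z)|²)². Consequently, the spherical derivative |df|²(z) := (1/(4π)) Δ_z log(1 + Σ_i |f_i(z)|²) of the holomorphic curve f = [1 : f₁ : ⋯ : f_N] satisfies |df|(z) = sqrt(Σ_i |f_i'(z)|² + Σ_{i<j} |f_i'(z)f_j(z) − f_i(z)f_j'(z)|²) / (√π (1 + Σ_i |f_i(z)|²)).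 -/
open Filter

/-- The spherical derivative of the holomorphic curve `[1 : f₁ : ⋯ : f_N]`. -/
noncomputable def sphericalDeriv {N : ℕ} (f : Fin N → ℂ → ℂ) (z : ℂ) : ℝ :=
  Real.sqrt (∑ i, ‖deriv (f i) z‖ ^ 2 +
      ∑ p ∈ Finset.univ.filter (fun p : Fin N × Fin N => p.1 < p.2),
        ‖deriv (f p.1) z * f p.2 z - f p.1 z * deriv (f p.2) z‖ ^ 2) /
    (Real.sqrt Real.pi * (1 + ∑ i, ‖f i z‖ ^ 2))

section Aux
open Complex Finset ComplexConjugate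


lemma lagrange_full {N : ℕ} (a b : Fin N → ℂ) :
    ∑ p : Fin N × Fin N, Complex.normSq (b p.1 * a p.2 - a p.1 * b p.2)
      = 2 * ((∑ i, Complex.normSq (a i)) * (∑ i, Complex.normSq (b i))
        - Complex.normSq (∑ i, conj (a i) * b i)) := by
  have key : ∀ p : Fin N × Fin N,
      (Complex.normSq (b p.1 * a p.2 - a p.1 * b p.2) : ℂ)
        = (b p.1 * conj (b p.1)) * (a p.2 * conj (a p.2))
          + (a p.1 * conj (a p.1)) * (b p.2 * conj (b p.2))
          - (conj (a p.1) * b p.1) * (a p.2 * conj (b p.2))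
          - (a p.1 * conj (b p.1)) * (conj (a p.2) * b p.2) := by
    intro p
    rw [← Complex.mul_conj]
    simp only [map_sub, map_mul]
    ring
  have hmain : (∑ p : Fin N × Fin N, (Complex.normSq (b p.1 * a p.2 - a p.1 * b p.2) : ℂ))
      = 2 * (((∑ i, Complex.normSq (a i) : ℝ) : ℂ) * ((∑ i, Complex.normSq (b i) : ℝ) : ℂ)
        - ((Complex.normSq (∑ i, conj (a i) * b i) : ℝ) : ℂ)) := by
    simp only [key]
    rw [show ((Complex.normSq (∑ i, conj (a i) * b i) : ℝ) : ℂ)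
        = (∑ i, conj (a i) * b i) * conj (∑ i, conj (a i) * b i) from (Complex.mul_conj _).symm]
    push_cast [← Complex.mul_conj]
    rw [Fintype.sum_prod_type]
    simp only [Finset.sum_sub_distrib, Finset.sum_add_distrib, ← Finset.sum_mul,
      ← Finset.mul_sum, map_sum, map_mul, RingHomCompTriple.comp_apply, RingHom.id_apply, Complex.conj_conj]
    ring
  have := congrArg Complex.re hmain
  push_cast at this
  simpa using this

lemma lagrange_pairs {N : ℕ} (a b : Fin N → ℂ) :
    ∑ p ∈ Finset.univ.filter (fun p : Fin N × Fin N => p.1 < p.2),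
        Complex.normSq (b p.1 * a p.2 - a p.1 * b p.2)
      = (∑ i, Complex.normSq (a i)) * (∑ i, Complex.normSq (b i))
        - Complex.normSq (∑ i, conj (a i) * b i) := by
  have hswap : ∑ p ∈ Finset.univ.filter (fun p : Fin N × Fin N => p.2 < p.1),
      Complex.normSq (b p.1 * a p.2 - a p.1 * b p.2)
      = ∑ p ∈ Finset.univ.filter (fun p : Fin N × Fin N => p.1 < p.2),
        Complex.normSq (b p.1 * a p.2 - a p.1 * b p.2) := by
    apply Finset.sum_nbij' (fun p => Prod.swap p) (fun p => Prod.swap p) <;>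
      simp
    · intro i j h
      rw [← Complex.normSq_neg]; ring_nf
  have hsplit := Finset.sum_filter_add_sum_filter_not Finset.univ
    (fun p : Fin N × Fin N => p.1 < p.2)
    (fun p => Complex.normSq (b p.1 * a p.2 - a p.1 * b p.2))
  have hnot : ∑ p ∈ Finset.univ.filter (fun p : Fin N × Fin N => ¬ p.1 < p.2),
      Complex.normSq (b p.1 * a p.2 - a p.1 * b p.2)
      = ∑ p ∈ Finset.univ.filter (fun p : Fin N × Fin N => p.2 < p.1),
        Complex.normSq (b p.1 * a p.2 - a p.1 * b p.2) := by
    rw [eq_comm]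
    apply Finset.sum_subset
    · intro p hp
      simp only [Finset.mem_filter, Finset.mem_univ, true_and] at *
      exact not_lt_of_gt hp
    · intro p hpt hps
      simp only [Finset.mem_filter, Finset.mem_univ, true_and, not_lt] at hpt hps
      have h12 : p.1 = p.2 := le_antisymm hps hpt
      rw [h12]
      simp [mul_comm]
  have hfull := lagrange_full a b
  rw [hnot, hswap] at hsplit
  linarith [hsplit, hfull]

set_option maxHeartbeats 2000000 in
lemma second_dir {N : ℕ} {U : Set ℂ} (hU : IsOpen U) (f : Fin N → ℂ → ℂ)
    (hf : ∀ i, DifferentiableOn ℂ (f i) U) {z : ℂ} (hz : z ∈ U) (v : ℂ) :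
    iteratedFDeriv ℝ 2 (fun w => Real.log (1 + ∑ i, ‖f i w‖ ^ 2)) z ![v, v]
      = (1 + ∑ i, ‖f i z‖ ^ 2)⁻¹ *
          (2 * ((∑ i, (conj (f i z) * (deriv (deriv (f i)) z * v)
              + deriv (f i) z * conj (deriv (f i) z * v))) * v).re)
        + (2 * ((∑ i, conj (f i z) * deriv (f i) z) * v).re) *
          (-((1 + ∑ i, ‖f i z‖ ^ 2) ^ 2)⁻¹ *
            (2 * ((∑ i, conj (f i z) * deriv (f i) z) * v).re)) := by
  set φ : ℂ → ℝ := fun w => Real.log (1 + ∑ i, ‖f i w‖ ^ 2) with hφdef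
  set S : ℂ → ℝ := fun w => 1 + ∑ i, ‖f i w‖ ^ 2 with hSdef
  have hSpos : ∀ w, 0 < S w := by
    intro w
    have : (0:ℝ) ≤ ∑ i, ‖f i w‖ ^ 2 := Finset.sum_nonneg fun i _ => by positivity
    simp only [hSdef]; linarith
  have hS0 : ∀ w, S w ≠ 0 := fun w => (hSpos w).ne'
  have hA : ∀ i, AnalyticOnNhd ℂ (f i) U := fun i => (hf i).analyticOnNhd hU
  have hfd : ∀ i, ∀ w ∈ U, HasDerivAt (f i) (deriv (f i) w) w := fun i w hw =>
    ((hf i w hw).differentiableAt (hU.mem_nhds hw)).hasDerivAt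
  have hb : ∀ i, HasDerivAt (deriv (f i)) (deriv (deriv (f i)) z) z :=
    fun i => (((hA i).deriv z hz).differentiableAt).hasDerivAt
  -- S has derivative on U
  have hS' : ∀ w ∈ U, HasFDerivAt S
      (∑ i, (2:ℕ) • ((innerSL ℝ (f i w)).comp ((deriv (f i) w) • (1 : ℂ →L[ℝ] ℂ)))) w := by
    intro w hw
    exact (HasFDerivAt.fun_sum (fun i _ =>
      ((hfd i w hw).complexToReal_fderiv).norm_sq)).const_add 1
  have hφ' : ∀ w ∈ U, HasFDerivAt φ ((S w)⁻¹ •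
      (∑ i, (2:ℕ) • ((innerSL ℝ (f i w)).comp ((deriv (f i) w) • (1 : ℂ →L[ℝ] ℂ))))) w :=
    fun w hw => (hS' w hw).log (hS0 w)
  -- first derivative formula
  have hψ : ∀ w ∈ U, fderiv ℝ φ w v
      = (S w)⁻¹ * (2 * ((∑ i, conj (f i w) * deriv (f i) w) * v).re) := by
    intro w hw
    rw [(hφ' w hw).fderiv]
    simp only [ContinuousLinearMap.coe_smul', Pi.smul_apply, ContinuousLinearMap.sum_apply,
      ContinuousLinearMap.smul_apply, ContinuousLinearMap.comp_apply,
      ContinuousLinearMap.one_apply, innerSL_apply_apply, Complex.inner, smul_eq_mul,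
      Finset.sum_mul, Complex.re_sum, Finset.mul_sum]
    rw [Finset.sum_congr rfl]
    intro i _
    push_cast
    ring_nf
  -- smoothness
  have hCD : ContDiffAt ℝ 2 φ z := by
    have hfi : ∀ i, ContDiffAt ℝ 2 (f i) z := fun i =>
      (((hA i) z hz).restrictScalars).contDiffAt
    exact ((contDiffAt_const (c := (1:ℝ))).add
      (ContDiffAt.sum (fun i _ => ContDiffAt.norm_sq ℂ (hfi i)))).log (hS0 z)
  have hdiff1 : DifferentiableAt ℝ (fderiv ℝ φ) z :=
    (hCD.fderiv_right (m := 1) (by norm_num)).differentiableAt (by norm_num)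
  -- reduce to directional derivative of the explicit first-derivative formula
  have step1 : iteratedFDeriv ℝ 2 φ z ![v, v]
      = fderiv ℝ (fun w => fderiv ℝ φ w v) z v := by
    rw [iteratedFDeriv_two_apply, fderiv_clm_apply hdiff1 (differentiableAt_const v)]
    simp
  have step2 : fderiv ℝ (fun w => fderiv ℝ φ w v) z
      = fderiv ℝ (fun w => (S w)⁻¹ * (2 * ((∑ i, conj (f i w) * deriv (f i) w) * v).re)) z :=
    Filter.EventuallyEq.fderiv_eq (Filter.eventuallyEq_of_mem (hU.mem_nhds hz) hψ)
  rw [step1, step2]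
  -- now compute the derivative of the explicit formula
  have hg := HasFDerivAt.fun_sum (u := (Finset.univ : Finset (Fin N))) (fun i _ =>
    HasFDerivAt.mul ((hfd i z hz).complexToReal_fderiv.star) ((hb i).complexToReal_fderiv))
  have hg' : HasFDerivAt (fun w => ∑ i, conj (f i w) * deriv (f i) w) _ z := hg
  have hgv : HasFDerivAt
      (fun w => 2 * ((∑ i, conj (f i w) * deriv (f i) w) * v).re) _ z :=
    ((Complex.reCLM.hasFDerivAt.comp z (hg'.mul_const v))).const_mul (2:ℝ)
  have hinv : HasFDerivAt (fun w => (S w)⁻¹) _ z :=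
    (hasDerivAt_inv (hS0 z)).comp_hasFDerivAt z (hS' z hz)
  have hmul : HasFDerivAt (fun w =>
      (S w)⁻¹ * (2 * ((∑ i, conj (f i w) * deriv (f i) w) * v).re)) _ z :=
    hinv.mul hgv
  rw [hmul.fderiv]
  simp only [ContinuousLinearMap.add_apply, ContinuousLinearMap.coe_smul', Pi.smul_apply,
    ContinuousLinearMap.smul_apply, ContinuousLinearMap.comp_apply, ContinuousLinearMap.sum_apply,
    ContinuousLinearMap.one_apply, Complex.reCLM_apply, innerSL_apply_apply, Complex.inner,
    smul_eq_mul, Finset.sum_mul, Complex.re_sum, Finset.mul_sum, Complex.smul_re]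
  simp only [hSdef, ContinuousLinearEquiv.coe_coe, starL'_apply, Complex.star_def,
    nsmul_eq_mul, Nat.cast_ofNat, map_mul, ContinuousLinearMap.add_apply,
    ContinuousLinearMap.coe_smul', Pi.smul_apply, ContinuousLinearMap.smul_apply,
    ContinuousLinearMap.comp_apply, ContinuousLinearMap.sum_apply,
    ContinuousLinearMap.one_apply, Complex.reCLM_apply, innerSL_apply_apply, Complex.inner,
    smul_eq_mul, Finset.sum_mul, Complex.re_sum, Finset.mul_sum]
  simp [mul_comm, mul_left_comm, mul_assoc]


lemma laplacian_eq {N : ℕ} {U : Set ℂ} (hU : IsOpen U) (f : Fin N → ℂ → ℂ)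
    (hf : ∀ i, DifferentiableOn ℂ (f i) U) {z : ℂ} (hz : z ∈ U) :
    laplacian (fun w => Real.log (1 + ∑ i, ‖f i w‖ ^ 2)) z =
      4 * (∑ i, Complex.normSq (deriv (f i) z) +
          ∑ p ∈ Finset.univ.filter (fun p : Fin N × Fin N => p.1 < p.2),
            Complex.normSq (deriv (f p.1) z * f p.2 z - f p.1 z * deriv (f p.2) z)) /
        (1 + ∑ i, Complex.normSq (f i z)) ^ 2 := by
  have h1 := second_dir hU f hf hz 1
  have hI := second_dir hU f hf hz Complex.I
  rw [laplacian, h1, hI]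
  set a : Fin N → ℂ := fun i => f i z with ha
  set b : Fin N → ℂ := fun i => deriv (f i) z with hbdef
  set c : Fin N → ℂ := fun i => deriv (deriv (f i)) z with hcdef
  have hpairs := lagrange_pairs a b
  have hnorm : ∀ w : ℂ, ‖w‖ ^ 2 = Complex.normSq w := fun w => by
    rw [Complex.sq_norm]
  simp only [hnorm]
  set P : ℝ := ∑ i, Complex.normSq (a i) with hP
  have hS0 : (1 : ℝ) + P ≠ 0 := by
    have : (0:ℝ) ≤ P := Finset.sum_nonneg fun i _ => Complex.normSq_nonneg _
    positivity
  set g : ℂ := ∑ i, conj (a i) * b i with hg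
  -- compute the real parts
  have e1 : ((∑ i, (conj (a i) * (c i * 1) + b i * conj (b i * 1))) * 1).re
      = (∑ i, (conj (a i) * c i).re) + ∑ i, Complex.normSq (b i) := by
    simp only [mul_one, Complex.re_sum, Complex.add_re, Finset.sum_add_distrib]
    congr 1
    apply Finset.sum_congr rfl
    intro i _
    rw [Complex.mul_conj]
    simp
  have eI : ((∑ i, (conj (a i) * (c i * Complex.I) + b i * conj (b i * Complex.I)))
        * Complex.I).re
      = -(∑ i, (conj (a i) * c i).re) + ∑ i, Complex.normSq (b i) := by
    rw [Finset.sum_mul, Complex.re_sum]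
    have : ∀ i, ((conj (a i) * (c i * Complex.I) + b i * conj (b i * Complex.I)) * Complex.I)
        = -(conj (a i) * c i) + (Complex.normSq (b i) : ℂ) := by
      intro i
      rw [← Complex.mul_conj, map_mul, Complex.conj_I]
      linear_combination (conj (a i) * c i - b i * conj (b i)) * Complex.I_sq
    simp only [this, Complex.add_re, Complex.neg_re, Complex.ofReal_re,
      Finset.sum_add_distrib, Finset.sum_neg_distrib]
  have eg1 : (g * 1).re = g.re := by simp
  have egI : (g * Complex.I).re = -g.im := Complex.mul_I_re g
  rw [e1, eI, eg1, egI]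
  have hG : Complex.normSq g = g.re ^ 2 + g.im ^ 2 := by
    rw [Complex.normSq_apply]; ring
  rw [hpairs, hG]
  field_simp
  ring

end Aux

theorem stmt_10 (N : ℕ) (hN : 1 ≤ N) (U : Set ℂ) (hU : IsOpen U)
    (f : Fin N → ℂ → ℂ) (hf : ∀ i, DifferentiableOn ℂ (f i) U) :
    ∀ z ∈ U,
      laplacian (fun w => Real.log (1 + ∑ i, ‖f i w‖ ^ 2)) z =
        4 * (∑ i, ‖deriv (f i) z‖ ^ 2 +
            ∑ p ∈ Finset.univ.filter (fun p : Fin N × Fin N => p.1 < p.2),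
              ‖deriv (f p.1) z * f p.2 z - f p.1 z * deriv (f p.2) z‖ ^ 2) /
          (1 + ∑ i, ‖f i z‖ ^ 2) ^ 2 ∧
      Real.sqrt ((1 / (4 * Real.pi)) *
          laplacian (fun w => Real.log (1 + ∑ i, ‖f i w‖ ^ 2)) z) =
        sphericalDeriv f z := by
  intro z hz
  have habs : (fun w => Real.log (1 + ∑ i, ‖f i w‖ ^ 2))
      = fun w => Real.log (1 + ∑ i, ‖f i w‖ ^ 2) := by
    funext w
    simp
  have hsq : ∀ w : ℂ, ‖w‖ ^ 2 = Complex.normSq w := Complex.sq_norm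
  have hpart1 : laplacian (fun w => Real.log (1 + ∑ i, ‖f i w‖ ^ 2)) z =
      4 * (∑ i, ‖deriv (f i) z‖ ^ 2 +
          ∑ p ∈ Finset.univ.filter (fun p : Fin N × Fin N => p.1 < p.2),
            ‖deriv (f p.1) z * f p.2 z - f p.1 z * deriv (f p.2) z‖ ^ 2) /
        (1 + ∑ i, ‖f i z‖ ^ 2) ^ 2 := by
    rw [habs, laplacian_eq hU f hf hz]
    simp only [hsq]
  refine ⟨hpart1, ?_⟩
  rw [hpart1]
  set T : ℝ := ∑ i, ‖deriv (f i) z‖ ^ 2 +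
      ∑ p ∈ Finset.univ.filter (fun p : Fin N × Fin N => p.1 < p.2),
        ‖deriv (f p.1) z * f p.2 z - f p.1 z * deriv (f p.2) z‖ ^ 2 with hT
  set S : ℝ := 1 + ∑ i, ‖f i z‖ ^ 2 with hS
  have hT0 : 0 ≤ T := by
    rw [hT]
    have h1 : (0:ℝ) ≤ ∑ i, ‖deriv (f i) z‖ ^ 2 :=
      Finset.sum_nonneg fun i _ => by positivity
    have h2 : (0:ℝ) ≤ ∑ p ∈ Finset.univ.filter (fun p : Fin N × Fin N => p.1 < p.2),
        ‖deriv (f p.1) z * f p.2 z - f p.1 z * deriv (f p.2) z‖ ^ 2 :=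
      Finset.sum_nonneg fun p _ => by positivity
    linarith
  have hSpos : 0 < S := by
    rw [hS]
    have : (0:ℝ) ≤ ∑ i, ‖f i z‖ ^ 2 :=
      Finset.sum_nonneg fun i _ => by positivity
    linarith
  have hkey : (1 / (4 * Real.pi)) * (4 * T / S ^ 2) = T / (Real.pi * S ^ 2) := by
    have hpi : Real.pi ≠ 0 := Real.pi_ne_zero
    field_simp
  rw [hkey, Real.sqrt_div hT0, Real.sqrt_mul Real.pi_pos.le, Real.sqrt_sq hSpos.le]
  rfl
end

section
/- Let N ≥ 1, and let a > 0 and R₀ ≥ 1 be real numbers with Na/R₀³ ≤ 2 and Na²/R₀⁶ ≤ 1/2. Let f₁, …, f_N: ℂ → ℂ be holomorphic functions such that σ(f)(z) ≤ 1 for all z ∈ ℂ. Define g_i(z) := f_i(z) + a/z³ on ℂ \ {0}. Set K_a := 4a√(N+1)(√π + 3a) + 3a, K_a' := 4a√(N+1)(√π + 3a√2 + 2a√π) + 3a√2 + 2a√π, and K := sqrt(N·K_a² + (N(N−1)/2)·(K_a')²)/√π. Then for every z ∈ ℂ with |z| ≥ R₀, one has |σ(g)(z) − σ(f)(z)| ≤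 K/|z|³. -/
open Filter

private lemma my_sq_le {x y : ℝ} (hy : 0 ≤ y) (h : x ^ 2 ≤ y ^ 2) (hx : 0 ≤ x) : x ≤ y := by
  nlinarith [sq_nonneg (x - y), sq_nonneg (x + y)]

private lemma abs_sqrt_sum_sq_sub_le {ι : Type*} (s : Finset ι) (x y : ι → ℝ) :
    |Real.sqrt (∑ i ∈ s, x i ^ 2) - Real.sqrt (∑ i ∈ s, y i ^ 2)| ≤
      Real.sqrt (∑ i ∈ s, (x i - y i) ^ 2) := by
  classical
  have key : ∀ u : ι → ℝ,
      ‖(WithLp.equiv 2 ({i // i ∈ s} → ℝ)).symm (fun i => u i.1)‖ =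
        Real.sqrt (∑ i ∈ s, u i ^ 2) := by
    intro u
    rw [EuclideanSpace.norm_eq]
    congr 1
    rw [← Finset.sum_coe_sort s fun i => u i ^ 2]
    refine Finset.sum_congr rfl fun i _ => ?_
    rw [WithLp.equiv_symm_apply, PiLp.toLp_apply, Real.norm_eq_abs, sq_abs]
  have h := abs_norm_sub_norm_le
    ((WithLp.equiv 2 ({i // i ∈ s} → ℝ)).symm (fun i => x i.1))
    ((WithLp.equiv 2 ({i // i ∈ s} → ℝ)).symm (fun i => y i.1))
  have hsub : (WithLp.equiv 2 ({i // i ∈ s} → ℝ)).symm (fun i => x i.1) -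
      (WithLp.equiv 2 ({i // i ∈ s} → ℝ)).symm (fun i => y i.1) =
      (WithLp.equiv 2 ({i // i ∈ s} → ℝ)).symm (fun i => x i.1 - y i.1) := rfl
  rw [hsub, key, key, key (fun i => x i - y i)] at h
  exact h

private lemma abs_sqrt_two_sum_sub_le {α β : Type*} (s : Finset α) (t : Finset β)
    (x y : α → ℝ) (X Y : β → ℝ) :
    |Real.sqrt (∑ i ∈ s, x i ^ 2 + ∑ p ∈ t, X p ^ 2) -
        Real.sqrt (∑ i ∈ s, y i ^ 2 + ∑ p ∈ t, Y p ^ 2)| ≤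
      Real.sqrt (∑ i ∈ s, (x i - y i) ^ 2 + ∑ p ∈ t, (X p - Y p) ^ 2) := by
  have h := abs_sqrt_sum_sq_sub_le (s.disjSum t) (Sum.elim x X) (Sum.elim y Y)
  simpa [Finset.sum_disjSum] using h

/-- The key elementary estimate for a single entry of the spherical derivative vector. -/
private lemma div_sub_div_bound {xg xf cg cf d e M : ℝ} (hcf : 1 ≤ cf) (hcg : 1 ≤ cg)
    (hxg0 : 0 ≤ xg) (hd : |xg - xf| ≤ d * cf) (hxg : xg ≤ e * cf)
    (hB : |cf - cg| ≤ M * cg) : |xg / cg - xf / cf| ≤ d + e * M := by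
  have hcf0 : (0:ℝ) < cf := lt_of_lt_of_le one_pos hcf
  have hcg0 : (0:ℝ) < cg := lt_of_lt_of_le one_pos hcg
  have hd0 : 0 ≤ d := by nlinarith [abs_nonneg (xg - xf)]
  have he0 : 0 ≤ e := by nlinarith
  have hM0 : 0 ≤ M := by nlinarith [abs_nonneg (cf - cg)]
  have hident : xg / cg - xf / cf = (xg - xf) / cf + xg * (cf - cg) / (cf * cg) := by
    field_simp
    ring
  rw [hident]
  have h1 : |(xg - xf) / cf| ≤ d := by
    rw [abs_div, abs_of_pos hcf0]
    calc |xg - xf| / cf ≤ d * cf / cf := by gcongr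
      _ = d := by field_simp
  have h2 : |xg * (cf - cg) / (cf * cg)| ≤ e * M := by
    rw [abs_div, abs_mul, abs_of_nonneg hxg0, abs_of_pos (by positivity : (0:ℝ) < cf * cg)]
    have hnum : xg * |cf - cg| ≤ (e * cf) * (M * cg) :=
      mul_le_mul hxg hB (abs_nonneg _) (by positivity)
    calc xg * |cf - cg| / (cf * cg) ≤ (e * cf) * (M * cg) / (cf * cg) := by gcongr
      _ = e * M := by field_simp
  calc |(xg - xf) / cf + xg * (cf - cg) / (cf * cg)|
      ≤ |(xg - xf) / cf| + |xg * (cf - cg) / (cf * cg)| := abs_add_le _ _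
    _ ≤ d + e * M := add_le_add h1 h2

private lemma sphericalDeriv_eq {N : ℕ} (h : Fin N → ℂ → ℂ) (z : ℂ) :
      sphericalDeriv h z = Real.sqrt (
        ∑ i, (‖deriv (h i) z‖ / (1 + ∑ j, ‖h j z‖ ^ 2)) ^ 2 +
        ∑ p ∈ Finset.univ.filter (fun p : Fin N × Fin N => p.1 < p.2),
          (‖deriv (h p.1) z * h p.2 z - h p.1 z * deriv (h p.2) z‖ /
            (1 + ∑ j, ‖h j z‖ ^ 2)) ^ 2) / Real.sqrt Real.pi := by
    have hc : (0:ℝ) < 1 + ∑ j, ‖h j z‖ ^ 2 := by positivity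
    have hA0 : (0:ℝ) ≤ ∑ i, ‖deriv (h i) z‖ ^ 2 +
        ∑ p ∈ Finset.univ.filter (fun p : Fin N × Fin N => p.1 < p.2),
          ‖deriv (h p.1) z * h p.2 z - h p.1 z * deriv (h p.2) z‖ ^ 2 := by
      positivity
    simp only [sphericalDeriv, div_pow, ← Finset.sum_div, ← add_div]
    rw [Real.sqrt_div hA0, Real.sqrt_sq hc.le, div_div, mul_comm]

private lemma brody_sq {N : ℕ} (f : Fin N → ℂ → ℂ) (z : ℂ)
    (hb : sphericalDeriv f z ≤ 1) :
    ∑ i, ‖deriv (f i) z‖ ^ 2 +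
      ∑ p ∈ Finset.univ.filter (fun p : Fin N × Fin N => p.1 < p.2),
        ‖deriv (f p.1) z * f p.2 z - f p.1 z * deriv (f p.2) z‖ ^ 2 ≤
      Real.pi * (1 + ∑ j, ‖f j z‖ ^ 2) ^ 2 := by
  unfold sphericalDeriv at hb
  have hc : (0:ℝ) < Real.sqrt Real.pi * (1 + ∑ j, ‖f j z‖ ^ 2) := by positivity
  rw [div_le_one hc] at hb
  have hA0 : (0:ℝ) ≤ ∑ i, ‖deriv (f i) z‖ ^ 2 +
      ∑ p ∈ Finset.univ.filter (fun p : Fin N × Fin N => p.1 < p.2),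
        ‖deriv (f p.1) z * f p.2 z - f p.1 z * deriv (f p.2) z‖ ^ 2 := by
    positivity
  have hsq := pow_le_pow_left₀ (Real.sqrt_nonneg _) hb 2
  rwa [Real.sq_sqrt hA0, mul_pow, Real.sq_sqrt Real.pi_pos.le] at hsq

private lemma brody_diag {N : ℕ} (f : Fin N → ℂ → ℂ) (z : ℂ)
    (hb : sphericalDeriv f z ≤ 1) (i : Fin N) :
    ‖deriv (f i) z‖ ≤
      Real.sqrt Real.pi * (1 + ∑ j, ‖f j z‖ ^ 2) := by
  have h := brody_sq f z hb
  have hterm : ‖deriv (f i) z‖ ^ 2 ≤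
      ∑ i, ‖deriv (f i) z‖ ^ 2 +
      ∑ p ∈ Finset.univ.filter (fun p : Fin N × Fin N => p.1 < p.2),
        ‖deriv (f p.1) z * f p.2 z - f p.1 z * deriv (f p.2) z‖ ^ 2 :=
    le_trans (Finset.single_le_sum
        (f := fun j : Fin N => ‖deriv (f j) z‖ ^ 2)
        (fun j _ => sq_nonneg _) (Finset.mem_univ i))
      (le_add_of_nonneg_right (Finset.sum_nonneg fun p _ => sq_nonneg _))
  have hB0 : (0:ℝ) ≤ ∑ j, ‖f j z‖ ^ 2 := by positivity
  refine my_sq_le (by positivity) ?_ (norm_nonneg _)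
  rw [mul_pow, Real.sq_sqrt Real.pi_pos.le]
  nlinarith

private lemma brody_wron {N : ℕ} (f : Fin N → ℂ → ℂ) (z : ℂ)
    (hb : sphericalDeriv f z ≤ 1) (p : Fin N × Fin N)
    (hp : p ∈ Finset.univ.filter (fun p : Fin N × Fin N => p.1 < p.2)) :
    ‖deriv (f p.1) z * f p.2 z - f p.1 z * deriv (f p.2) z‖ ≤
      Real.sqrt Real.pi * (1 + ∑ j, ‖f j z‖ ^ 2) := by
  have h := brody_sq f z hb
  have hterm : ‖deriv (f p.1) z * f p.2 z - f p.1 z * deriv (f p.2) z‖ ^ 2 ≤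
      ∑ i, ‖deriv (f i) z‖ ^ 2 +
      ∑ p ∈ Finset.univ.filter (fun p : Fin N × Fin N => p.1 < p.2),
        ‖deriv (f p.1) z * f p.2 z - f p.1 z * deriv (f p.2) z‖ ^ 2 :=
    le_trans (Finset.single_le_sum
        (f := fun q : Fin N × Fin N =>
          ‖deriv (f q.1) z * f q.2 z - f q.1 z * deriv (f q.2) z‖ ^ 2)
        (fun q _ => sq_nonneg _) hp)
      (le_add_of_nonneg_left (Finset.sum_nonneg fun j _ => sq_nonneg _))
  have hB0 : (0:ℝ) ≤ ∑ j, ‖f j z‖ ^ 2 := by positivity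
  refine my_sq_le (by positivity) ?_ (norm_nonneg _)
  rw [mul_pow, Real.sq_sqrt Real.pi_pos.le]
  nlinarith

private lemma card_pairs_le (N : ℕ) :
    2 * (Finset.univ.filter (fun p : Fin N × Fin N => p.1 < p.2)).card ≤ N * N - N := by
  classical
  set P := Finset.univ.filter (fun p : Fin N × Fin N => p.1 < p.2) with hP
  set Q := Finset.univ.filter (fun p : Fin N × Fin N => p.2 < p.1) with hQ
  have hcard : P.card = Q.card := by
    apply Finset.card_bij' (fun p _ => Prod.swap p) (fun p _ => Prod.swap p)
    · intro p hp
      simp only [hP, hQ, Finset.mem_filter, Finset.mem_univ, true_and] at hp ⊢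
      exact hp
    · intro p hp
      simp only [hP, hQ, Finset.mem_filter, Finset.mem_univ, true_and] at hp ⊢
      exact hp
    · intro p _; simp
    · intro p _; simp
  have hdisj : Disjoint P Q := by
    rw [Finset.disjoint_left]
    intro p hp hq
    simp only [hP, hQ, Finset.mem_filter, Finset.mem_univ, true_and] at hp hq
    exact absurd hq (lt_asymm hp)
  have hsub : P ∪ Q ⊆ Finset.univ.offDiag := by
    intro p hp
    rcases Finset.mem_union.mp hp with h | h <;>
      simp only [hP, hQ, Finset.mem_filter, Finset.mem_univ, true_and] at h <;>
      simp only [Finset.mem_offDiag, Finset.mem_univ, true_and]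
    · exact ne_of_lt h
    · exact ne_of_gt h
  calc 2 * P.card = P.card + Q.card := by rw [hcard]; ring
    _ = (P ∪ Q).card := (Finset.card_union_of_disjoint hdisj).symm
    _ ≤ (Finset.univ : Finset (Fin N)).offDiag.card := Finset.card_le_card hsub
    _ = N * N - N := by rw [Finset.offDiag_card, Finset.card_univ, Fintype.card_fin]

set_option maxHeartbeats 2000000 in
theorem stmt_12 (N : ℕ) (hN : 1 ≤ N) (a R₀ : ℝ) (ha : 0 < a) (hR₀ : 1 ≤ R₀)
    (h1 : (N : ℝ) * a / R₀ ^ 3 ≤ 2) (h2 : (N : ℝ) * a ^ 2 / R₀ ^ 6 ≤ 1 / 2)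
    (f : Fin N → ℂ → ℂ) (hf : ∀ i, Differentiable ℂ (f i))
    (hBrody : ∀ z : ℂ, sphericalDeriv f z ≤ 1)
    (g : Fin N → ℂ → ℂ) (hg : ∀ i, ∀ z : ℂ, g i z = f i z + (a : ℂ) / z ^ 3)
    (Ka Ka' K : ℝ)
    (hKa : Ka = 4 * a * Real.sqrt ((N : ℝ) + 1) * (Real.sqrt Real.pi + 3 * a) + 3 * a)
    (hKa' : Ka' = 4 * a * Real.sqrt ((N : ℝ) + 1) *
        (Real.sqrt Real.pi + 3 * a * Real.sqrt 2 + 2 * a * Real.sqrt Real.pi) +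
      3 * a * Real.sqrt 2 + 2 * a * Real.sqrt Real.pi)
    (hK : K = Real.sqrt ((N : ℝ) * Ka ^ 2 + ((N : ℝ) * ((N : ℝ) - 1) / 2) * Ka' ^ 2) /
      Real.sqrt Real.pi) :
    ∀ z : ℂ, R₀ ≤ ‖z‖ →
      |sphericalDeriv g z - sphericalDeriv f z| ≤ K / ‖z‖ ^ 3 := by
  intro z hz
  have hπ : (0:ℝ) < Real.pi := Real.pi_pos
  have hsπ : (0:ℝ) < Real.sqrt Real.pi := Real.sqrt_pos.2 hπ
  have hr1 : (1:ℝ) ≤ ‖z‖ := le_trans hR₀ hz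
  have hr0 : (0:ℝ) < ‖z‖ := lt_of_lt_of_le one_pos hr1
  have hz0 : z ≠ 0 := by
    intro h
    rw [h, norm_zero] at hr0
    exact lt_irrefl 0 hr0
  have hr3 : (0:ℝ) < ‖z‖ ^ 3 := pow_pos hr0 3
  obtain ⟨t, htdef⟩ : ∃ t : ℝ, t = 1 / ‖z‖ ^ 3 := ⟨_, rfl⟩
  have ht0 : 0 < t := by rw [htdef]; exact div_pos one_pos hr3
  have ht1 : t ≤ 1 := by
    rw [htdef, div_le_one hr3]
    exact one_le_pow₀ hr1
  have hR₀0 : (0:ℝ) < R₀ := lt_of_lt_of_le one_pos hR₀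
  have htR : t ≤ 1 / R₀ ^ 3 := by
    rw [htdef]
    apply one_div_le_one_div_of_le (by positivity)
    exact pow_le_pow_left₀ hR₀0.le hz 3
  -- N a² t² ≤ 1/2
  have hNat2 : (N:ℝ) * a ^ 2 * t ^ 2 ≤ 1 / 2 := by
    have h6 : t ^ 2 ≤ 1 / R₀ ^ 6 := by
      have hm := mul_le_mul htR htR ht0.le (by positivity)
      calc t ^ 2 = t * t := sq t
        _ ≤ (1 / R₀ ^ 3) * (1 / R₀ ^ 3) := hm
        _ = 1 / R₀ ^ 6 := by rw [div_mul_div_comm, one_mul, ← pow_add]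
    calc (N:ℝ) * a ^ 2 * t ^ 2 ≤ (N:ℝ) * a ^ 2 * (1 / R₀ ^ 6) := by
          apply mul_le_mul_of_nonneg_left h6 (by positivity)
      _ = (N:ℝ) * a ^ 2 / R₀ ^ 6 := by ring
      _ ≤ 1 / 2 := h2
  obtain ⟨q, hqdef⟩ : ∃ q : ℝ, q = Real.sqrt N * (a * t) := ⟨_, rfl⟩
  have hq0 : 0 ≤ q := by rw [hqdef]; positivity
  have hqsq : q ^ 2 = (N:ℝ) * a ^ 2 * t ^ 2 := by
    rw [hqdef, mul_pow, Real.sq_sqrt (Nat.cast_nonneg N)]; ring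
  have hq1 : q ≤ 1 := by nlinarith only [sq_nonneg (q - 1), hqsq, hNat2, hq0]
  -- derivative of g
  have hgd : ∀ i, deriv (g i) z = deriv (f i) z + -(3 * (a:ℂ)) / z ^ 4 := by
    intro i
    have h1' : HasDerivAt (f i) (deriv (f i) z) z := (hf i z).hasDerivAt
    have hz3 : z ^ 3 ≠ 0 := pow_ne_zero _ hz0
    have hp : HasDerivAt (fun w : ℂ => w ^ 3) (((3:ℕ):ℂ) * z ^ 2) z := by
      simpa using hasDerivAt_pow 3 z
    have h2' : HasDerivAt (fun w : ℂ => (a:ℂ) * (w ^ 3)⁻¹)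
        ((a:ℂ) * (-(((3:ℕ):ℂ) * z ^ 2) / (z ^ 3) ^ 2)) z := (hp.inv hz3).const_mul _
    have h2'' : HasDerivAt (fun w : ℂ => (a:ℂ) / w ^ 3) (-(3 * (a:ℂ)) / z ^ 4) z := by
      have hfun : (fun w : ℂ => (a:ℂ) * (w ^ 3)⁻¹) = fun w : ℂ => (a:ℂ) / w ^ 3 := by
        funext w; rw [div_eq_mul_inv]
      rw [hfun] at h2'
      convert h2' using 1
      field_simp
      ring
    have hgfun : g i = fun w => f i w + (a:ℂ) / w ^ 3 := funext (hg i)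
    rw [hgfun]
    exact (h1'.add h2'').deriv
  -- abs values of the perturbations
  have huabs : ‖(a:ℂ) / z ^ 3‖ = a * t := by
    rw [norm_div, norm_pow, Complex.norm_real, Real.norm_eq_abs, abs_of_pos ha, htdef]
    ring
  have hu'abs : ‖-(3 * (a:ℂ)) / z ^ 4‖ ≤ 3 * (a * t) := by
    have he : ‖-(3 * (a:ℂ)) / z ^ 4‖ = 3 * a / ‖z‖ ^ 4 := by
      rw [norm_div, norm_neg, norm_pow]
      norm_num
      rw [abs_of_pos ha]
    rw [he, htdef]
    rw [div_le_iff₀ (by positivity)]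
    have hfe : 3 * (a * (1 / ‖z‖ ^ 3)) * ‖z‖ ^ 4
        = 3 * a * ‖z‖ := by field_simp
    rw [hfe]
    nlinarith only [mul_nonneg ha.le (sub_nonneg.2 hr1), ha, hr1]
  -- Brody component bounds
  have hDF := brody_diag f z (hBrody z)
  have hWFb := brody_wron f z (hBrody z)
  -- rewrite the goal in vector form
  rw [sphericalDeriv_eq g z, sphericalDeriv_eq f z, div_sub_div_same, abs_div,
    abs_of_pos hsπ]
  obtain ⟨P, hPdef⟩ : ∃ P : Finset (Fin N × Fin N),
      P = Finset.univ.filter (fun p : Fin N × Fin N => p.1 < p.2) := ⟨_, rfl⟩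
  obtain ⟨Bf, hBfdef⟩ : ∃ B : ℝ, B = ∑ j, ‖f j z‖ ^ 2 := ⟨_, rfl⟩
  obtain ⟨Bg, hBgdef⟩ : ∃ B : ℝ, B = ∑ j, ‖g j z‖ ^ 2 := ⟨_, rfl⟩
  rw [← hPdef, ← hBfdef, ← hBgdef]
  rw [← hBfdef] at hDF hWFb
  rw [← hPdef] at hWFb
  have hBf0 : 0 ≤ Bf := by
    rw [hBfdef]; exact Finset.sum_nonneg fun j _ => sq_nonneg _
  have hBg0 : 0 ≤ Bg := by
    rw [hBgdef]; exact Finset.sum_nonneg fun j _ => sq_nonneg _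
  have hcf1 : (1:ℝ) ≤ 1 + Bf := by linarith
  have hcg1 : (1:ℝ) ≤ 1 + Bg := by linarith
  -- comparison of |f i z| and |g i z|
  have hgfz : ∀ i : Fin N, |‖g i z‖ - ‖f i z‖| ≤ a * t := by
    intro i
    have h := abs_norm_sub_norm_le (g i z) (f i z)
    have he2 : g i z - f i z = (a:ℂ) / z ^ 3 := by rw [hg i z]; ring
    rw [he2, huabs] at h
    exact h
  have hterm : ∀ i : Fin N, |‖g i z‖ ^ 2 - ‖f i z‖ ^ 2| ≤
      a * t * (2 * ‖g i z‖ + a * t) := by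
    intro i
    have h' := abs_le.mp (hgfz i)
    have hG0 : 0 ≤ ‖g i z‖ := norm_nonneg _
    have hF0 : 0 ≤ ‖f i z‖ := norm_nonneg _
    have hat0 : (0:ℝ) ≤ a * t := by positivity
    rw [abs_le]
    constructor
    · nlinarith only [mul_nonneg (by linarith [h'.1] :
          (0:ℝ) ≤ ‖g i z‖ + a * t - ‖f i z‖)
        (by linarith : (0:ℝ) ≤ ‖g i z‖ + a * t + ‖f i z‖)]
    · nlinarith only [mul_le_mul_of_nonneg_right h'.2
          (by linarith : (0:ℝ) ≤ ‖g i z‖ + ‖f i z‖),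
        mul_nonneg hat0 (by linarith [h'.1] :
          (0:ℝ) ≤ ‖g i z‖ + a * t - ‖f i z‖)]
  -- Cauchy-Schwarz for ∑ |g i z|
  have hCS : (∑ i, ‖g i z‖) ^ 2 ≤ (N:ℝ) * Bg := by
    have h := sq_sum_le_card_mul_sum_sq (s := Finset.univ)
      (f := fun i : Fin N => ‖g i z‖)
    rw [hBgdef]
    simpa [Finset.card_univ] using h
  have h2SG : 2 * (∑ i, ‖g i z‖) ≤ Real.sqrt N * (1 + Bg) := by
    have hS0 : (0:ℝ) ≤ ∑ i, ‖g i z‖ :=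
      Finset.sum_nonneg fun i _ => norm_nonneg _
    apply my_sq_le (by positivity) ?_ (by linarith)
    have hrs : (Real.sqrt N * (1 + Bg)) ^ 2 = (N:ℝ) * (1 + Bg) ^ 2 := by
      rw [mul_pow, Real.sq_sqrt (Nat.cast_nonneg N)]
    rw [hrs]
    nlinarith only [hCS, mul_nonneg (Nat.cast_nonneg (α := ℝ) N) (sq_nonneg (1 - Bg))]
  -- the key bound on |Bg - Bf|
  have hBdiff : |Bg - Bf| ≤ (4 * a * Real.sqrt ((N:ℝ) + 1) * t) * (1 + Bg) := by
    have hsum : |Bg - Bf| ≤ 2 * (a * t) * (∑ i, ‖g i z‖) + (N:ℝ) * (a * t) ^ 2 := by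
      calc |Bg - Bf| = |∑ i, (‖g i z‖ ^ 2 - ‖f i z‖ ^ 2)| := by
            rw [hBgdef, hBfdef, ← Finset.sum_sub_distrib]
        _ ≤ ∑ i, |‖g i z‖ ^ 2 - ‖f i z‖ ^ 2| :=
            Finset.abs_sum_le_sum_abs _ _
        _ ≤ ∑ i, (a * t * (2 * ‖g i z‖ + a * t)) :=
            Finset.sum_le_sum fun i _ => hterm i
        _ = 2 * (a * t) * (∑ i, ‖g i z‖) + (N:ℝ) * (a * t) ^ 2 := by
            simp only [mul_add, Finset.sum_add_distrib, ← Finset.mul_sum, Finset.sum_const,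
              Finset.card_univ, Fintype.card_fin, nsmul_eq_mul]
            ring
    have hq2 : (N:ℝ) * (a * t) ^ 2 ≤ Real.sqrt N * (a * t) := by
      nlinarith only [hqsq, hqdef, mul_nonneg hq0 (sub_nonneg.2 hq1)]
    have hs0 : 0 ≤ Real.sqrt ((N:ℝ) + 1) := Real.sqrt_nonneg _
    have hNle : Real.sqrt (N:ℝ) ≤ Real.sqrt ((N:ℝ) + 1) := Real.sqrt_le_sqrt (by linarith)
    have hstep : 2 * (a * t) * (∑ i, ‖g i z‖) ≤ (a * t) * (Real.sqrt N * (1 + Bg)) := by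
      have := mul_le_mul_of_nonneg_left h2SG (by positivity : (0:ℝ) ≤ a * t)
      nlinarith only [this]
    calc |Bg - Bf| ≤ 2 * (a * t) * (∑ i, ‖g i z‖) + (N:ℝ) * (a * t) ^ 2 := hsum
      _ ≤ (a * t) * (Real.sqrt N * (1 + Bg)) + Real.sqrt N * (a * t) := add_le_add hstep hq2
      _ ≤ (a * t) * (Real.sqrt ((N:ℝ) + 1) * (1 + Bg)) +
          Real.sqrt ((N:ℝ) + 1) * (a * t) * (1 + Bg) := by
          refine add_le_add ?_ ?_
          · have : Real.sqrt (N:ℝ) * (1 + Bg) ≤ Real.sqrt ((N:ℝ) + 1) * (1 + Bg) :=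
              mul_le_mul_of_nonneg_right hNle (by linarith)
            exact mul_le_mul_of_nonneg_left this (by positivity)
          · nlinarith only [mul_nonneg (mul_nonneg hs0 (mul_nonneg ha.le ht0.le)) hBg0,
              mul_le_mul_of_nonneg_right hNle (mul_nonneg ha.le ht0.le)]
      _ = 2 * (a * Real.sqrt ((N:ℝ) + 1) * t * (1 + Bg)) := by ring
      _ ≤ (4 * a * Real.sqrt ((N:ℝ) + 1) * t) * (1 + Bg) := by
          nlinarith only [mul_nonneg (mul_nonneg (mul_nonneg ha.le hs0) ht0.le)
            (by linarith : (0:ℝ) ≤ 1 + Bg)]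
  have hBdiff' : |(1 + Bf) - (1 + Bg)| ≤ (4 * a * Real.sqrt ((N:ℝ) + 1) * t) * (1 + Bg) := by
    have he3 : (1 + Bf) - (1 + Bg) = -(Bg - Bf) := by ring
    rw [he3, abs_neg]
    exact hBdiff
  -- diagonal entries
  have hdiagE : ∀ i : Fin N,
      |‖deriv (g i) z‖ / (1 + Bg) - ‖deriv (f i) z‖ / (1 + Bf)| ≤
        Ka * t := by
    intro i
    have hbase : |‖deriv (g i) z‖ - ‖deriv (f i) z‖| ≤ 3 * (a * t) := by
      have h := abs_norm_sub_norm_le (deriv (g i) z) (deriv (f i) z)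
      have he4 : deriv (g i) z - deriv (f i) z = -(3 * (a:ℂ)) / z ^ 4 := by rw [hgd i]; ring
      rw [he4] at h
      exact h.trans hu'abs
    have hd : |‖deriv (g i) z‖ - ‖deriv (f i) z‖| ≤
        (3 * (a * t)) * (1 + Bf) := by
      refine hbase.trans ?_
      nlinarith only [mul_nonneg (mul_nonneg ha.le ht0.le) hBf0]
    have hxg : ‖deriv (g i) z‖ ≤ (Real.sqrt Real.pi + 3 * a) * (1 + Bf) := by
      have h' := abs_le.mp hbase
      have h1' := hDF i
      nlinarith only [h'.2, h1', mul_nonneg ha.le hBf0, mul_nonneg ha.le (sub_nonneg.2 ht1),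
        mul_nonneg (mul_nonneg ha.le (sub_nonneg.2 ht1)) hBf0]
    have hmain := div_sub_div_bound hcf1 hcg1 (norm_nonneg _) hd hxg hBdiff'
    refine hmain.trans (le_of_eq ?_)
    rw [hKa]; ring
  -- wronskian entries
  have hwronE : ∀ p ∈ P,
      |‖deriv (g p.1) z * g p.2 z - g p.1 z * deriv (g p.2) z‖ / (1 + Bg) -
        ‖deriv (f p.1) z * f p.2 z - f p.1 z * deriv (f p.2) z‖ / (1 + Bf)| ≤
        Ka' * t := by
    intro p hp
    have hplt : p.1 < p.2 := by
      rw [hPdef] at hp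
      simpa using (Finset.mem_filter.mp hp).2
    have hpair : ‖f p.2 z‖ + ‖f p.1 z‖ ≤
        Real.sqrt 2 * (1 + Bf) := by
      have hps : ‖f p.1 z‖ ^ 2 + ‖f p.2 z‖ ^ 2 ≤ Bf := by
        have hmono := Finset.sum_le_sum_of_subset_of_nonneg
          (Finset.subset_univ ({p.1, p.2} : Finset (Fin N)))
          (fun j _ _ => sq_nonneg (‖f j z‖))
        rw [Finset.sum_pair (ne_of_lt hplt)] at hmono
        rw [hBfdef]
        exact hmono
      apply my_sq_le (by positivity) ?_
        (add_nonneg (norm_nonneg _) (norm_nonneg _))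
      rw [mul_pow, Real.sq_sqrt (by norm_num : (0:ℝ) ≤ 2)]
      nlinarith only [hps, sq_nonneg (‖f p.1 z‖ - ‖f p.2 z‖), hBf0,
        sq_nonneg Bf]
    have hd : |‖deriv (g p.1) z * g p.2 z - g p.1 z * deriv (g p.2) z‖ -
        ‖deriv (f p.1) z * f p.2 z - f p.1 z * deriv (f p.2) z‖| ≤
        ((2 * Real.sqrt Real.pi * a + 3 * Real.sqrt 2 * a) * t) * (1 + Bf) := by
      have h := abs_norm_sub_norm_le
        (deriv (g p.1) z * g p.2 z - g p.1 z * deriv (g p.2) z)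
        (deriv (f p.1) z * f p.2 z - f p.1 z * deriv (f p.2) z)
      have heq : (deriv (g p.1) z * g p.2 z - g p.1 z * deriv (g p.2) z) -
          (deriv (f p.1) z * f p.2 z - f p.1 z * deriv (f p.2) z) =
          ((a:ℂ) / z ^ 3) * (deriv (f p.1) z - deriv (f p.2) z) +
          (-(3 * (a:ℂ)) / z ^ 4) * (f p.2 z - f p.1 z) := by
        rw [hgd p.1, hgd p.2, hg p.1 z, hg p.2 z]
        ring
      rw [heq] at h
      refine h.trans ?_
      calc ‖((a:ℂ) / z ^ 3) * (deriv (f p.1) z - deriv (f p.2) z) +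
            (-(3 * (a:ℂ)) / z ^ 4) * (f p.2 z - f p.1 z)‖
          ≤ ‖((a:ℂ) / z ^ 3) * (deriv (f p.1) z - deriv (f p.2) z)‖ +
            ‖(-(3 * (a:ℂ)) / z ^ 4) * (f p.2 z - f p.1 z)‖ :=
            norm_add_le _ _
        _ = ‖(a:ℂ) / z ^ 3‖ * ‖deriv (f p.1) z - deriv (f p.2) z‖ +
            ‖-(3 * (a:ℂ)) / z ^ 4‖ * ‖f p.2 z - f p.1 z‖ := by
            rw [norm_mul, norm_mul]
        _ ≤ (a * t) * (2 * (Real.sqrt Real.pi * (1 + Bf))) +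
            (3 * (a * t)) * (Real.sqrt 2 * (1 + Bf)) := by
            refine add_le_add ?_ ?_
            · refine mul_le_mul (le_of_eq huabs) ?_ (norm_nonneg _) (by positivity)
              refine (norm_sub_le _ _).trans ?_
              have hp1 := hDF p.1
              have hp2 := hDF p.2
              linarith
            · refine mul_le_mul hu'abs ?_ (norm_nonneg _) (by positivity)
              exact (norm_sub_le _ _).trans hpair
        _ = ((2 * Real.sqrt Real.pi * a + 3 * Real.sqrt 2 * a) * t) * (1 + Bf) := by ring
    have hxg : ‖deriv (g p.1) z * g p.2 z - g p.1 z * deriv (g p.2) z‖ ≤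
        (Real.sqrt Real.pi + 2 * Real.sqrt Real.pi * a + 3 * Real.sqrt 2 * a) * (1 + Bf) := by
      have h' := abs_le.mp hd
      have hW := hWFb p hp
      have hcoef : (0:ℝ) ≤ 2 * Real.sqrt Real.pi * a + 3 * Real.sqrt 2 * a := by positivity
      have h3 : ((2 * Real.sqrt Real.pi * a + 3 * Real.sqrt 2 * a) * t) * (1 + Bf) ≤
          (2 * Real.sqrt Real.pi * a + 3 * Real.sqrt 2 * a) * (1 + Bf) := by
        have := mul_le_of_le_one_right hcoef ht1
        exact mul_le_mul_of_nonneg_right this (by linarith)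
      linarith only [h'.2, hW, h3]
    have hmain := div_sub_div_bound hcf1 hcg1 (norm_nonneg _) hd hxg hBdiff'
    refine hmain.trans (le_of_eq ?_)
    rw [hKa']; ring
  -- cardinality of P
  have hPcardR : (P.card : ℝ) ≤ (N:ℝ) * ((N:ℝ) - 1) / 2 := by
    have hc2 : 2 * P.card ≤ N * N - N := by rw [hPdef]; exact card_pairs_le N
    have hNle : N ≤ N * N := Nat.le_mul_of_pos_left N (by omega)
    have hcast : ((2 * P.card : ℕ) : ℝ) ≤ ((N * N - N : ℕ) : ℝ) := Nat.cast_le.mpr hc2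
    rw [Nat.cast_sub hNle] at hcast
    push_cast at hcast
    linarith
  -- assemble
  have hKa0 : 0 ≤ Ka * t := by
    rw [hKa]; positivity
  have hKa'0 : 0 ≤ Ka' * t := by
    rw [hKa']; positivity
  have hsum1 : ∑ i, (‖deriv (g i) z‖ / (1 + Bg) -
      ‖deriv (f i) z‖ / (1 + Bf)) ^ 2 ≤ (N:ℝ) * (Ka * t) ^ 2 := by
    calc ∑ i, (‖deriv (g i) z‖ / (1 + Bg) -
          ‖deriv (f i) z‖ / (1 + Bf)) ^ 2
        ≤ ∑ _i : Fin N, (Ka * t) ^ 2 := by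
          refine Finset.sum_le_sum fun i _ => ?_
          have h' := abs_le.mp (hdiagE i)
          exact sq_le_sq' (by linarith [h'.1]) h'.2
      _ = (N:ℝ) * (Ka * t) ^ 2 := by
          rw [Finset.sum_const, Finset.card_univ, Fintype.card_fin, nsmul_eq_mul]
  have hsum2 : ∑ p ∈ P, (‖deriv (g p.1) z * g p.2 z - g p.1 z * deriv (g p.2) z‖ /
        (1 + Bg) -
      ‖deriv (f p.1) z * f p.2 z - f p.1 z * deriv (f p.2) z‖ / (1 + Bf)) ^ 2 ≤
      ((N:ℝ) * ((N:ℝ) - 1) / 2) * (Ka' * t) ^ 2 := by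
    calc ∑ p ∈ P, (‖deriv (g p.1) z * g p.2 z - g p.1 z * deriv (g p.2) z‖ /
          (1 + Bg) -
        ‖deriv (f p.1) z * f p.2 z - f p.1 z * deriv (f p.2) z‖ / (1 + Bf)) ^ 2
        ≤ ∑ _p ∈ P, (Ka' * t) ^ 2 := by
          refine Finset.sum_le_sum fun p hp => ?_
          have h' := abs_le.mp (hwronE p hp)
          exact sq_le_sq' (by linarith [h'.1]) h'.2
      _ = (P.card : ℝ) * (Ka' * t) ^ 2 := by rw [Finset.sum_const, nsmul_eq_mul]
      _ ≤ ((N:ℝ) * ((N:ℝ) - 1) / 2) * (Ka' * t) ^ 2 :=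
          mul_le_mul_of_nonneg_right hPcardR (sq_nonneg _)
  have hX0 : (0:ℝ) ≤ (N:ℝ) * Ka ^ 2 + ((N:ℝ) * ((N:ℝ) - 1) / 2) * Ka' ^ 2 := by
    have hN1R : (1:ℝ) ≤ (N:ℝ) := by exact_mod_cast hN
    have : (0:ℝ) ≤ (N:ℝ) * ((N:ℝ) - 1) / 2 := by
      apply div_nonneg _ (by norm_num)
      exact mul_nonneg (by linarith) (by linarith)
    exact add_nonneg (mul_nonneg (Nat.cast_nonneg N) (sq_nonneg _))
      (mul_nonneg this (sq_nonneg _))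
  have hstep1 : |Real.sqrt (∑ i, (‖deriv (g i) z‖ / (1 + Bg)) ^ 2 +
        ∑ p ∈ P, (‖deriv (g p.1) z * g p.2 z - g p.1 z * deriv (g p.2) z‖ /
          (1 + Bg)) ^ 2) -
      Real.sqrt (∑ i, (‖deriv (f i) z‖ / (1 + Bf)) ^ 2 +
        ∑ p ∈ P, (‖deriv (f p.1) z * f p.2 z - f p.1 z * deriv (f p.2) z‖ /
          (1 + Bf)) ^ 2)| ≤
      Real.sqrt (∑ i, (‖deriv (g i) z‖ / (1 + Bg) -
          ‖deriv (f i) z‖ / (1 + Bf)) ^ 2 +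
        ∑ p ∈ P, (‖deriv (g p.1) z * g p.2 z - g p.1 z * deriv (g p.2) z‖ /
            (1 + Bg) -
          ‖deriv (f p.1) z * f p.2 z - f p.1 z * deriv (f p.2) z‖ / (1 + Bf)) ^ 2) :=
    abs_sqrt_two_sum_sub_le Finset.univ P
      (fun i => ‖deriv (g i) z‖ / (1 + Bg))
      (fun i => ‖deriv (f i) z‖ / (1 + Bf))
      (fun p => ‖deriv (g p.1) z * g p.2 z - g p.1 z * deriv (g p.2) z‖ / (1 + Bg))
      (fun p => ‖deriv (f p.1) z * f p.2 z - f p.1 z * deriv (f p.2) z‖ / (1 + Bf))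
  have hstep2 : Real.sqrt (∑ i, (‖deriv (g i) z‖ / (1 + Bg) -
          ‖deriv (f i) z‖ / (1 + Bf)) ^ 2 +
        ∑ p ∈ P, (‖deriv (g p.1) z * g p.2 z - g p.1 z * deriv (g p.2) z‖ /
            (1 + Bg) -
          ‖deriv (f p.1) z * f p.2 z - f p.1 z * deriv (f p.2) z‖ / (1 + Bf)) ^ 2) ≤
      Real.sqrt ((N:ℝ) * Ka ^ 2 + ((N:ℝ) * ((N:ℝ) - 1) / 2) * Ka' ^ 2) * t := by
    have heq5 : (N:ℝ) * (Ka * t) ^ 2 + ((N:ℝ) * ((N:ℝ) - 1) / 2) * (Ka' * t) ^ 2 =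
        ((N:ℝ) * Ka ^ 2 + ((N:ℝ) * ((N:ℝ) - 1) / 2) * Ka' ^ 2) * t ^ 2 := by ring
    calc Real.sqrt (∑ i, (‖deriv (g i) z‖ / (1 + Bg) -
          ‖deriv (f i) z‖ / (1 + Bf)) ^ 2 +
        ∑ p ∈ P, (‖deriv (g p.1) z * g p.2 z - g p.1 z * deriv (g p.2) z‖ /
            (1 + Bg) -
          ‖deriv (f p.1) z * f p.2 z - f p.1 z * deriv (f p.2) z‖ / (1 + Bf)) ^ 2)
        ≤ Real.sqrt ((N:ℝ) * (Ka * t) ^ 2 + ((N:ℝ) * ((N:ℝ) - 1) / 2) * (Ka' * t) ^ 2) :=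
          Real.sqrt_le_sqrt (add_le_add hsum1 hsum2)
      _ = Real.sqrt ((N:ℝ) * Ka ^ 2 + ((N:ℝ) * ((N:ℝ) - 1) / 2) * Ka' ^ 2) * t := by
          rw [heq5, Real.sqrt_mul hX0, Real.sqrt_sq ht0.le]
  calc |Real.sqrt (∑ i, (‖deriv (g i) z‖ / (1 + Bg)) ^ 2 +
        ∑ p ∈ P, (‖deriv (g p.1) z * g p.2 z - g p.1 z * deriv (g p.2) z‖ /
          (1 + Bg)) ^ 2) -
      Real.sqrt (∑ i, (‖deriv (f i) z‖ / (1 + Bf)) ^ 2 +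
        ∑ p ∈ P, (‖deriv (f p.1) z * f p.2 z - f p.1 z * deriv (f p.2) z‖ /
          (1 + Bf)) ^ 2)| / Real.sqrt Real.pi
      ≤ (Real.sqrt ((N:ℝ) * Ka ^ 2 + ((N:ℝ) * ((N:ℝ) - 1) / 2) * Ka' ^ 2) * t) /
          Real.sqrt Real.pi := by
        gcongr
        exact hstep1.trans hstep2
    _ = K * t := by rw [hK]; ring
    _ = K / ‖z‖ ^ 3 := by rw [htdef]; ring
end
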